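/- arXiv:2207.11272 — 3 statements merged into one kernel-verified Lean document; each statement's English description precedes it below -/
import Mathlib

section
/- Let D = C₃ be the directed 3-cycle on vertices {1,2,3} with arcs (1,2), (2,3), (3,1) (semi-restricted Rock, Paper, Scissors). Then the greedy strategy R_g is an optimal strategy for Rei, and it is the unique optimal strategy: every optimal strategy R for Rei satisfies R(r) = R_g(r) for every nonzero restriction vector r. -/
open Finset

/-- A digraph: finite vertex set, no loops, at most one arc per pair. -/
structure Digraph' (V : Type) where
  Adj : V → V → Bool
  irrefl : ∀ v, Adj v v = false
  asymm : ∀ u v, Adj u v = true → Adj v u = false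

namespace Digraph'

variable {V : Type} [Fintype V] [DecidableEq V] (D : Digraph' V)

/-- Out-neighborhood N⁺(v). -/
def outN (v : V) : Finset V := univ.filter fun u => D.Adj v u
/-- In-neighborhood N⁻(v). -/
def inN (v : V) : Finset V := univ.filter fun u => D.Adj u v

/-- max over vertices v of Σ_{u∈N⁺(v)} p u − Σ_{u∈N⁻(v)} p u. -/
noncomputable def payoff (p : V → ℝ) : ℝ :=
  sSup (Set.range fun v => (∑ u ∈ D.outN v, p u) - ∑ u ∈ D.inN v, p u)

/-- Auxiliary (fuel-indexed) definition of the value of the semi-restricted D-game. -/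
noncomputable def valueAux : ℕ → (V → ℕ) → ℝ
  | 0, _ => 0
  | (n+1), r =>
    if ∀ u, r u = 0 then 0
    else sInf { x : ℝ | ∃ p : V → ℝ, (∀ u, 0 ≤ p u) ∧ (∑ u, p u = 1) ∧
      (∀ u, p u ≠ 0 → r u ≠ 0) ∧
      x = D.payoff p + ∑ u, p u * valueAux n (fun w => r w - if w = u then 1 else 0) }

/-- The value S_D(r) of the semi-restricted D-game with restriction vector r. -/
noncomputable def value (r : V → ℕ) : ℝ := D.valueAux (∑ u, r u) r

end Digraph'

/-- A strategy for Rei in the semi-restricted D-game. -/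
structure ReiStrategy {V : Type} [Fintype V] [DecidableEq V] (D : Digraph' V) where
  play : (V → ℕ) → V → ℝ
  nonneg : ∀ r : V → ℕ, (¬ ∀ u, r u = 0) → ∀ u, 0 ≤ play r u
  sum_one : ∀ r : V → ℕ, (¬ ∀ u, r u = 0) → ∑ u, play r u = 1
  supp : ∀ r : V → ℕ, (¬ ∀ u, r u = 0) → ∀ u, play r u ≠ 0 → r u ≠ 0

namespace Digraph'

variable {V : Type} [Fintype V] [DecidableEq V] (D : Digraph' V)

/-- Auxiliary (fuel-indexed) value of Rei's strategy R. -/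
noncomputable def stratValueAux (R : ReiStrategy D) : ℕ → (V → ℕ) → ℝ
  | 0, _ => 0
  | (n+1), r =>
    if ∀ u, r u = 0 then 0
    else D.payoff (R.play r) +
      ∑ u, R.play r u * stratValueAux R n (fun w => r w - if w = u then 1 else 0)

/-- The value S_D(r; R) of Rei's strategy R at restriction vector r. -/
noncomputable def stratValue (R : ReiStrategy D) (r : V → ℕ) : ℝ :=
  D.stratValueAux R (∑ u, r u) r

/-- A strategy for Rei is optimal if its value equals the game value at every restriction vector. -/
def IsOptimal (R : ReiStrategy D) : Prop := ∀ r : V → ℕ, D.stratValue R r = D.value r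

/-- A strategy is oblivious if it only depends on the support of the restriction vector. -/
def IsOblivious (R : ReiStrategy D) : Prop :=
  ∀ r r' : V → ℕ, (∀ u, r u ≠ 0 ↔ r' u ≠ 0) → R.play r = R.play r'

/-- A digraph is oblivious if Rei has an oblivious optimal strategy. -/
def Oblivious : Prop := ∃ R : ReiStrategy D, D.IsOptimal R ∧ D.IsOblivious R

/-- A tournament: exactly one arc between any two distinct vertices. -/
def IsTournament : Prop := ∀ u v : V, u ≠ v → (D.Adj u v = true ∨ D.Adj v u = true)

/-- Eulerian: every vertex has equal in- and out-degree. -/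
def IsEulerian : Prop := ∀ v : V, (D.outN v).card = (D.inN v).card

/-- The skew adjacency matrix of a digraph. -/
def skewAdj : Matrix V V ℝ := fun u v =>
  if D.Adj u v then 1 else if D.Adj v u then -1 else 0

end Digraph'
/-- The directed 3-cycle 0 → 1 → 2 → 0 (Rock, Paper, Scissors). -/
def C3 : Digraph' (Fin 3) where
  Adj i j := decide (j = i + 1)
  irrefl := by decide
  asymm := by decide

/-- The greedy strategy for Rei in semi-restricted RPS: with all three options,
play each with probability 1/3; with two options, play the one beating the other
with probability 2/3; with one option, play it with probability 1. -/
noncomputable def greedyPlay (r : Fin 3 → ℕ) (u : Fin 3) : ℝ :=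
  if r u = 0 then 0
  else if r (u + 1) ≠ 0 then (if r (u + 2) ≠ 0 then 1/3 else 2/3)
  else if r (u + 2) ≠ 0 then 1/3 else 1

set_option maxHeartbeats 1000000




noncomputable def Gv : ℕ → ℕ → ℕ → ℝ
  | 0, 0, 0 => 0
  | a+1, 0, 0 => (a:ℝ)+1
  | 0, b+1, 0 => (b:ℝ)+1
  | 0, 0, c+1 => (c:ℝ)+1
  | a+1, b+1, 0 => 1/3 + 2/3 * Gv a (b+1) 0 + 1/3 * Gv (a+1) b 0
  | 0, b+1, c+1 => 1/3 + 2/3 * Gv 0 b (c+1) + 1/3 * Gv 0 (b+1) c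
  | a+1, 0, c+1 => 1/3 + 2/3 * Gv (a+1) 0 c + 1/3 * Gv a 0 (c+1)
  | a+1, b+1, c+1 => 1/3 * Gv a (b+1) (c+1) + 1/3 * Gv (a+1) b (c+1) + 1/3 * Gv (a+1) (b+1) c
  termination_by a b c => a + b + c

theorem Gv_rot : ∀ a b c : ℕ, Gv a b c = Gv b c a
  | 0, 0, 0 => by simp [Gv]
  | a+1, 0, 0 => by simp [Gv]
  | 0, b+1, 0 => by simp [Gv]
  | 0, 0, c+1 => by simp [Gv]
  | a+1, b+1, 0 => by
      rw [show Gv (a+1) (b+1) 0 = 1/3 + 2/3 * Gv a (b+1) 0 + 1/3 * Gv (a+1) b 0 from by simp [Gv],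
        show Gv (b+1) 0 (a+1) = 1/3 + 2/3 * Gv (b+1) 0 a + 1/3 * Gv b 0 (a+1) from by simp [Gv],
        Gv_rot a (b+1) 0, Gv_rot (a+1) b 0]
  | 0, b+1, c+1 => by
      rw [show Gv 0 (b+1) (c+1) = 1/3 + 2/3 * Gv 0 b (c+1) + 1/3 * Gv 0 (b+1) c from by simp [Gv],
        show Gv (b+1) (c+1) 0 = 1/3 + 2/3 * Gv b (c+1) 0 + 1/3 * Gv (b+1) c 0 from by simp [Gv],
        Gv_rot 0 b (c+1), Gv_rot 0 (b+1) c]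
  | a+1, 0, c+1 => by
      rw [show Gv (a+1) 0 (c+1) = 1/3 + 2/3 * Gv (a+1) 0 c + 1/3 * Gv a 0 (c+1) from by simp [Gv],
        show Gv 0 (c+1) (a+1) = 1/3 + 2/3 * Gv 0 c (a+1) + 1/3 * Gv 0 (c+1) a from by simp [Gv],
        Gv_rot (a+1) 0 c, Gv_rot a 0 (c+1)]
  | a+1, b+1, c+1 => by
      rw [show Gv (a+1) (b+1) (c+1) = 1/3 * Gv a (b+1) (c+1) + 1/3 * Gv (a+1) b (c+1) + 1/3 * Gv (a+1) (b+1) c from by simp [Gv],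
        show Gv (b+1) (c+1) (a+1) = 1/3 * Gv b (c+1) (a+1) + 1/3 * Gv (b+1) c (a+1) + 1/3 * Gv (b+1) (c+1) a from by simp [Gv],
        Gv_rot a (b+1) (c+1), Gv_rot (a+1) b (c+1), Gv_rot (a+1) (b+1) c]
      ring
  termination_by a b c => a + b + c

noncomputable def Del (x y : ℕ) : ℝ := Gv x (y+1) 0 - Gv (x+1) y 0

lemma Gv_a00 (a : ℕ) : Gv a 0 0 = a := by
  match a with
  | 0 => simp [Gv]
  | a+1 => simp [Gv]

lemma Del_a0 : ∀ a : ℕ, -2 < Del a 0 ∧ Del a 0 ≤ 0 := by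
  intro a
  induction a with
  | zero => norm_num [Del, Gv]
  | succ a ih =>
      have h1 : Del (a+1) 0 = 2/3 * Del a 0 - 2/3 := by
        simp only [Del, show Gv (a+1) 1 0 = 1/3 + 2/3 * Gv a 1 0 + 1/3 * Gv (a+1) 0 0 from by
          simp [Gv], Gv_a00]
        push_cast
        ring
      constructor <;> rw [h1] <;> linarith [ih.1, ih.2]

lemma Del_0b : ∀ b : ℕ, 0 ≤ Del 0 b ∧ Del 0 b < 1 := by
  intro b
  induction b with
  | zero => norm_num [Del, Gv]
  | succ b ih =>
      have h0 : Gv 0 (b+1) 0 = (b:ℝ)+1 := by simp [Gv]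
      have h2 : Gv 0 (b+2) 0 = (b:ℝ)+2 := by
        rw [show Gv 0 (b+2) 0 = Gv 0 (b+1+1) 0 from rfl]; simp [Gv]; try ring
      have h1 : Del 0 (b+1) = 2/3 + 1/3 * Del 0 b := by
        simp only [Del, show Gv 1 (b+1) 0 = 1/3 + 2/3 * Gv 0 (b+1) 0 + 1/3 * Gv 1 b 0 from by
          simp [Gv], h0, h2]
        ring
      constructor <;> rw [h1] <;> linarith [ih.1, ih.2]

lemma Del_bounds : ∀ x y : ℕ, -2 < Del x y ∧ Del x y < 1 := by
  have key : ∀ n : ℕ, ∀ x y : ℕ, x + y = n → (-2 < Del x y ∧ Del x y < 1) := by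
    intro n
    induction n using Nat.strong_induction_on with
    | _ n ih => ?_
    intro x y hn
    match x, y with
    | x, 0 => exact ⟨(Del_a0 x).1, lt_of_le_of_lt (Del_a0 x).2 (by norm_num)⟩
    | 0, y+1 => exact ⟨lt_of_lt_of_le (by norm_num) (Del_0b (y+1)).1, (Del_0b (y+1)).2⟩
    | x+1, y+1 =>
        have e1 : Gv (x+1) (y+2) 0 = 1/3 + 2/3 * Gv x (y+2) 0 + 1/3 * Gv (x+1) (y+1) 0 := by
          simp [Gv]
        have e2 : Gv (x+2) (y+1) 0 = 1/3 + 2/3 * Gv (x+1) (y+1) 0 + 1/3 * Gv (x+2) y 0 := by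
          simp [Gv]
        have h1 : Del (x+1) (y+1) = 2/3 * Del x (y+1) + 1/3 * Del (x+1) y := by
          simp only [Del]
          rw [show x+1+1 = x+2 from rfl, show y+1+1 = y+2 from rfl, e1, e2]
          ring
        have b1 := ih (x + (y+1)) (by omega) x (y+1) rfl
        have b2 := ih ((x+1) + y) (by omega) (x+1) y rfl
        constructor <;> rw [h1] <;> [linarith [b1.1, b2.1]; linarith [b1.2, b2.2]]

  exact fun x y => key (x+y) x y rfl

lemma Gv_0b0 (b : ℕ) : Gv 0 b 0 = b := by
  match b with
  | 0 => simp [Gv]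
  | b+1 => simp [Gv]

lemma Gv_1b0 : ∀ b : ℕ, Gv 1 b 0 = b + (1/3:ℝ)^b := by
  intro b
  induction b with
  | zero => norm_num [Gv]
  | succ b ih =>
      rw [show Gv 1 (b+1) 0 = 1/3 + 2/3 * Gv 0 (b+1) 0 + 1/3 * Gv 1 b 0 from by simp [Gv],
        Gv_0b0, ih]
      push_cast; ring

lemma Gv_a10 : ∀ a : ℕ, Gv a 1 0 = (a:ℝ) - 1 + 2*(2/3:ℝ)^a := by
  intro a
  induction a with
  | zero => norm_num [Gv]
  | succ a ih =>
      rw [show Gv (a+1) 1 0 = 1/3 + 2/3 * Gv a 1 0 + 1/3 * Gv (a+1) 0 0 from by simp [Gv],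
        Gv_a00, ih]
      push_cast; ring

noncomputable def D0 (x y z : ℕ) : ℝ := Gv x (y+1) z - Gv (x+1) y z

lemma D0_00c (c : ℕ) : -2 < D0 0 0 c ∧ D0 0 0 c < 1 := by
  have h1 : Gv 0 1 c = Gv 1 c 0 := by rw [Gv_rot 0 1 c]
  have h2 : Gv 1 0 c = Gv c 1 0 := by rw [Gv_rot 1 0 c, Gv_rot 0 c 1]
  have hD : D0 0 0 c = 1 + (1/3:ℝ)^c - 2*(2/3:ℝ)^c := by
    simp only [D0, h1, h2, Gv_1b0, Gv_a10]; ring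
  have hp1 : (0:ℝ) < (1/3:ℝ)^c := by positivity
  have hp2 : (1/3:ℝ)^c ≤ (2/3:ℝ)^c := pow_le_pow_left₀ (by norm_num) (by norm_num) c
  have hp3 : (2/3:ℝ)^c ≤ 1 := pow_le_one₀ (by norm_num) (by norm_num)
  have hp4 : (0:ℝ) < (2/3:ℝ)^c := by positivity
  constructor <;> rw [hD] <;> nlinarith

lemma D0_bounds : ∀ x y z : ℕ, -2 < D0 x y z ∧ D0 x y z < 1 := by
  have key : ∀ n : ℕ, ∀ x y z : ℕ, x + y + z = n → (-2 < D0 x y z ∧ D0 x y z < 1) := by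
    intro n
    induction n using Nat.strong_induction_on with
    | _ n ih => ?_
    intro x y z hn
    match x, y, z with
    | x, y, 0 =>
        have : D0 x y 0 = Del x y := rfl
        rw [this]; exact Del_bounds x y
    | 0, 0, c+1 => exact D0_00c (c+1)
    | 0, y+1, c+1 =>
        have e1 : Gv 0 (y+2) (c+1) = 1/3 + 2/3 * Gv 0 (y+1) (c+1) + 1/3 * Gv 0 (y+2) c := by
          simp [Gv]
        have e2 : Gv 1 (y+1) (c+1)
            = 1/3 * Gv 0 (y+1) (c+1) + 1/3 * Gv 1 y (c+1) + 1/3 * Gv 1 (y+1) c := by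
          simp [Gv]; try ring
        have h1 : D0 0 (y+1) (c+1) = 1/3 + 1/3 * D0 0 y (c+1) + 1/3 * D0 0 (y+1) c := by
          simp only [D0]
          rw [show y+1+1 = y+2 from rfl, e1, e2]; ring
        have b1 := ih (0 + y + (c+1)) (by omega) 0 y (c+1) rfl
        have b2 := ih (0 + (y+1) + c) (by omega) 0 (y+1) c rfl
        constructor <;> rw [h1] <;> [linarith [b1.1, b2.1]; linarith [b1.2, b2.2]]
    | x+1, 0, c+1 =>
        have e1 : Gv (x+1) 1 (c+1)
            = 1/3 * Gv x 1 (c+1) + 1/3 * Gv (x+1) 0 (c+1) + 1/3 * Gv (x+1) 1 c := by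
          simp [Gv]; try ring
        have e2 : Gv (x+2) 0 (c+1) = 1/3 + 2/3 * Gv (x+2) 0 c + 1/3 * Gv (x+1) 0 (c+1) := by
          simp [Gv]
        have r1 : Gv (x+1) 0 (c+1) = Gv (c+1) (x+1) 0 := by
          rw [Gv_rot (x+1) 0 (c+1), Gv_rot 0 (c+1) (x+1)]
        have r2 : Gv (x+2) 0 c = Gv c (x+2) 0 := by
          rw [Gv_rot (x+2) 0 c, Gv_rot 0 c (x+2)]
        have h1 : D0 (x+1) 0 (c+1)
            = 1/3 * D0 x 0 (c+1) + 1/3 * D0 (x+1) 0 c - 1/3 * Del c (x+1) - 1/3 := by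
          simp only [D0, Del]
          rw [show x+1+1 = x+2 from rfl, e1, e2, r1, r2]
          ring
        have b1 := ih (x + 0 + (c+1)) (by omega) x 0 (c+1) rfl
        have b2 := ih ((x+1) + 0 + c) (by omega) (x+1) 0 c rfl
        have b3 := Del_bounds c (x+1)
        constructor <;> rw [h1] <;>
          [linarith [b1.1, b2.1, b3.2]; linarith [b1.2, b2.2, b3.1]]
    | x+1, y+1, c+1 =>
        have e1 : Gv (x+1) (y+2) (c+1)
            = 1/3 * Gv x (y+2) (c+1) + 1/3 * Gv (x+1) (y+1) (c+1) + 1/3 * Gv (x+1) (y+2) c := by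
          simp [Gv]; try ring
        have e2 : Gv (x+2) (y+1) (c+1)
            = 1/3 * Gv (x+1) (y+1) (c+1) + 1/3 * Gv (x+2) y (c+1) + 1/3 * Gv (x+2) (y+1) c := by
          simp [Gv]; try ring
        have h1 : D0 (x+1) (y+1) (c+1)
            = 1/3 * D0 x (y+1) (c+1) + 1/3 * D0 (x+1) y (c+1) + 1/3 * D0 (x+1) (y+1) c := by
          simp only [D0]
          rw [show x+1+1 = x+2 from rfl, show y+1+1 = y+2 from rfl, e1, e2]
          ring
        have b1 := ih (x + (y+1) + (c+1)) (by omega) x (y+1) (c+1) rfl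
        have b2 := ih ((x+1) + y + (c+1)) (by omega) (x+1) y (c+1) rfl
        have b3 := ih ((x+1) + (y+1) + c) (by omega) (x+1) (y+1) c rfl
        constructor <;> rw [h1] <;>
          [linarith [b1.1, b2.1, b3.1]; linarith [b1.2, b2.2, b3.2]]
  exact fun x y z => key (x+y+z) x y z rfl

lemma C3_outN (v : Fin 3) : C3.outN v = {v+1} := by fin_cases v <;> decide
lemma C3_inN (v : Fin 3) : C3.inN v = {v+2} := by fin_cases v <;> decide

lemma C3_payoff_term (p : Fin 3 → ℝ) (v : Fin 3) :
    (∑ u ∈ C3.outN v, p u) - ∑ u ∈ C3.inN v, p u = p (v+1) - p (v+2) := by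
  rw [C3_outN, C3_inN]; simp

lemma C3_le_payoff (p : Fin 3 → ℝ) (v : Fin 3) : p (v+1) - p (v+2) ≤ C3.payoff p := by
  rw [← C3_payoff_term]
  exact le_csSup ((Set.finite_range _).bddAbove) ⟨v, rfl⟩

lemma C3_payoff_le (p : Fin 3 → ℝ) (x : ℝ) (h : ∀ v : Fin 3, p (v+1) - p (v+2) ≤ x) :
    C3.payoff p ≤ x := by
  apply csSup_le (Set.range_nonempty _)
  rintro _ ⟨v, rfl⟩
  simpa only [C3_payoff_term] using h v

lemma C3_payoff_eq (p : Fin 3 → ℝ) (x : ℝ) (h : ∀ v : Fin 3, p (v+1) - p (v+2) ≤ x)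
    (v0 : Fin 3) (hv : p (v0+1) - p (v0+2) = x) : C3.payoff p = x :=
  le_antisymm (C3_payoff_le p x h) (hv ▸ C3_le_payoff p v0)

lemma greedy_nonneg (r : Fin 3 → ℕ) (u : Fin 3) : 0 ≤ greedyPlay r u := by
  unfold greedyPlay; split_ifs <;> norm_num

lemma greedy_supp (r : Fin 3 → ℕ) (u : Fin 3) (h : greedyPlay r u ≠ 0) : r u ≠ 0 := by
  intro h0; apply h; unfold greedyPlay; rw [if_pos h0]

lemma greedy_sum (r : Fin 3 → ℕ) (hr : ¬ ∀ u, r u = 0) : ∑ u, greedyPlay r u = 1 := by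
  rw [Fin.sum_univ_three]
  rcases eq_or_ne (r 0) 0 with h0|h0 <;> rcases eq_or_ne (r 1) 0 with h1|h1 <;>
    rcases eq_or_ne (r 2) 0 with h2|h2 <;>
    simp [greedyPlay, h0, h1, h2, show ((0:Fin 3)+1) = 1 from rfl,
      show ((0:Fin 3)+2) = 2 from rfl, show ((1:Fin 3)+1) = 2 from rfl,
      show ((1:Fin 3)+2) = 0 from rfl, show ((2:Fin 3)+1) = 0 from rfl,
      show ((2:Fin 3)+2) = 1 from rfl] <;> norm_num
  exact hr (by intro u; fin_cases u <;> assumption)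

def dsub (r : Fin 3 → ℕ) (u : Fin 3) : Fin 3 → ℕ := fun w => r w - if w = u then 1 else 0

noncomputable def Gr (r : Fin 3 → ℕ) : ℝ := Gv (r 0) (r 1) (r 2)

lemma dsub0 (r : Fin 3 → ℕ) : Gr (dsub r 0) = Gv (r 0 - 1) (r 1) (r 2) := by
  simp [Gr, dsub]
lemma dsub1 (r : Fin 3 → ℕ) : Gr (dsub r 1) = Gv (r 0) (r 1 - 1) (r 2) := by
  simp [Gr, dsub]
lemma dsub2 (r : Fin 3 → ℕ) : Gr (dsub r 2) = Gv (r 0) (r 1) (r 2 - 1) := by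
  simp [Gr, dsub]

lemma master (r : Fin 3 → ℕ) (lam : Fin 3 → ℝ)
    (hl1 : lam 0 + lam 1 + lam 2 = 1)
    (ht : ∀ u, r u ≠ 0 → Gr (dsub r u) = Gr r - lam (u+2) + lam (u+1))
    (p : Fin 3 → ℝ) (hp1 : p 0 + p 1 + p 2 = 1)
    (hps : ∀ u, p u ≠ 0 → r u ≠ 0) :
    C3.payoff p + ∑ u, p u * Gr (dsub r u) =
      Gr r + (lam 0 * (C3.payoff p - (p 1 - p 2)) + lam 1 * (C3.payoff p - (p 2 - p 0))
        + lam 2 * (C3.payoff p - (p 0 - p 1))) := by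
  have hterm : ∀ u : Fin 3, p u * Gr (dsub r u) = p u * (Gr r - lam (u+2) + lam (u+1)) := by
    intro u
    rcases eq_or_ne (p u) 0 with h|h
    · rw [h]; ring
    · rw [ht u (hps u h)]
  rw [Fin.sum_univ_three, hterm 0, hterm 1, hterm 2,
    show ((0:Fin 3)+1) = 1 from rfl, show ((0:Fin 3)+2) = 2 from rfl,
    show ((1:Fin 3)+1) = 2 from rfl, show ((1:Fin 3)+2) = 0 from rfl,
    show ((2:Fin 3)+1) = 0 from rfl, show ((2:Fin 3)+2) = 1 from rfl]
  linear_combination (-(C3.payoff p)) * hl1 + (Gr r) * hp1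

lemma fe01 : ((0:Fin 3)+1) = 1 := rfl
lemma fe02 : ((0:Fin 3)+2) = 2 := rfl
lemma fe11 : ((1:Fin 3)+1) = 2 := rfl
lemma fe12 : ((1:Fin 3)+2) = 0 := rfl
lemma fe21 : ((2:Fin 3)+1) = 0 := rfl
lemma fe22 : ((2:Fin 3)+2) = 1 := rfl

lemma key_case01 (r : Fin 3 → ℕ) (x y : ℕ) (hx : r 0 = x+1) (hy : r 1 = y+1) (hz : r 2 = 0)
    (p : Fin 3 → ℝ) (hp0 : ∀ u, 0 ≤ p u) (hp1 : ∑ u, p u = 1)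
    (hps : ∀ u, p u ≠ 0 → r u ≠ 0) :
    Gr r ≤ C3.payoff p + ∑ u, p u * Gr (dsub r u) ∧
    (C3.payoff p + ∑ u, p u * Gr (dsub r u) = Gr r → p = greedyPlay r) := by
  set G0 := Gv x (y+1) 0 with hG0
  set G1 := Gv (x+1) y 0 with hG1
  have hd : -2 < G0 - G1 ∧ G0 - G1 < 1 := Del_bounds x y
  have hGr : Gr r = 1/3 + 2/3 * G0 + 1/3 * G1 := by
    rw [Gr, hx, hy, hz]; simp [Gv]; rfl
  have hd0 : Gr (dsub r 0) = G0 := by rw [dsub0, hx, hy, hz]; simp; rfl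
  have hd1 : Gr (dsub r 1) = G1 := by rw [dsub1, hx, hy, hz]; simp; rfl
  set lam : Fin 3 → ℝ := ![(2+G0-G1)/3, 0, (1+G1-G0)/3] with hlam
  have ht : ∀ u, r u ≠ 0 → Gr (dsub r u) = Gr r - lam (u+2) + lam (u+1) := by
    intro u hu
    fin_cases u
    · show Gr (dsub r 0) = Gr r - (1+G1-G0)/3 + 0
      rw [hd0, hGr]; ring
    · show Gr (dsub r 1) = Gr r - (2+G0-G1)/3 + (1+G1-G0)/3
      rw [hd1, hGr]; ring
    · exact absurd hz hu
  have heq := master r lam (by show (2+G0-G1)/3 + 0 + (1+G1-G0)/3 = 1; ring) ht p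
    (by rwa [Fin.sum_univ_three] at hp1) hps
  have l0 : lam 0 = (2+G0-G1)/3 := rfl
  have l1 : lam 1 = 0 := rfl
  have l2 : lam 2 = (1+G1-G0)/3 := rfl
  rw [l0, l1, l2] at heq
  have hM0 : p 1 - p 2 ≤ C3.payoff p := C3_le_payoff p 0
  have hM2 : p 0 - p 1 ≤ C3.payoff p := C3_le_payoff p 2
  have hs0 : 0 ≤ (2+G0-G1)/3 * (C3.payoff p - (p 1 - p 2)) := by
    apply mul_nonneg <;> linarith [hd.1, hd.2]
  have hs2 : 0 ≤ (1+G1-G0)/3 * (C3.payoff p - (p 0 - p 1)) := by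
    apply mul_nonneg <;> linarith [hd.1, hd.2]
  constructor
  · linarith [heq, hs0, hs2]
  · intro he
    rw [he] at heq
    have hz0 : (2+G0-G1)/3 * (C3.payoff p - (p 1 - p 2)) = 0 := by linarith
    have hz2 : (1+G1-G0)/3 * (C3.payoff p - (p 0 - p 1)) = 0 := by linarith
    have e0 : C3.payoff p = p 1 - p 2 := by
      rcases mul_eq_zero.1 hz0 with h|h
      · exfalso; linarith [hd.2]
      · linarith
    have e2 : C3.payoff p = p 0 - p 1 := by
      rcases mul_eq_zero.1 hz2 with h|h
      · exfalso; linarith [hd.1]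
      · linarith
    have hp2 : p 2 = 0 := by
      by_contra h; exact hps 2 h hz
    rw [Fin.sum_univ_three] at hp1
    have g0 : greedyPlay r 0 = 2/3 := by
      simp [greedyPlay, hx, hy, hz, fe01, fe02]
    have g1 : greedyPlay r 1 = 1/3 := by
      simp [greedyPlay, hx, hy, hz, fe11, fe12]
    have g2 : greedyPlay r 2 = 0 := by
      simp [greedyPlay, hz]
    funext u
    fin_cases u
    · show p 0 = greedyPlay r 0
      rw [g0]; linarith
    · show p 1 = greedyPlay r 1
      rw [g1]; linarith
    · show p 2 = greedyPlay r 2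
      rw [g2, hp2]

lemma key_case12 (r : Fin 3 → ℕ) (y z : ℕ) (hx : r 0 = 0) (hy : r 1 = y+1) (hz : r 2 = z+1)
    (p : Fin 3 → ℝ) (hp0 : ∀ u, 0 ≤ p u) (hp1 : ∑ u, p u = 1)
    (hps : ∀ u, p u ≠ 0 → r u ≠ 0) :
    Gr r ≤ C3.payoff p + ∑ u, p u * Gr (dsub r u) ∧
    (C3.payoff p + ∑ u, p u * Gr (dsub r u) = Gr r → p = greedyPlay r) := by
  set G1 := Gv 0 y (z+1) with hG1
  set G2 := Gv 0 (y+1) z with hG2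
  have hd : -2 < G1 - G2 ∧ G1 - G2 < 1 := by
    have e1 : G1 = Gv y (z+1) 0 := Gv_rot 0 y (z+1)
    have e2 : G2 = Gv (y+1) z 0 := Gv_rot 0 (y+1) z
    rw [e1, e2]; exact Del_bounds y z
  have hGr : Gr r = 1/3 + 2/3 * G1 + 1/3 * G2 := by
    rw [Gr, hx, hy, hz]; simp [Gv]; rfl
  have hd1 : Gr (dsub r 1) = G1 := by rw [dsub1, hx, hy, hz]; simp; rfl
  have hd2 : Gr (dsub r 2) = G2 := by rw [dsub2, hx, hy, hz]; simp; rfl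
  set lam : Fin 3 → ℝ := ![(1+G2-G1)/3, (2+G1-G2)/3, 0] with hlam
  have ht : ∀ u, r u ≠ 0 → Gr (dsub r u) = Gr r - lam (u+2) + lam (u+1) := by
    intro u hu
    fin_cases u
    · exact absurd hx hu
    · show Gr (dsub r 1) = Gr r - (1+G2-G1)/3 + 0
      rw [hd1, hGr]; ring
    · show Gr (dsub r 2) = Gr r - (2+G1-G2)/3 + (1+G2-G1)/3
      rw [hd2, hGr]; ring
  have heq := master r lam (by show (1+G2-G1)/3 + (2+G1-G2)/3 + 0 = 1; ring) ht p
    (by rwa [Fin.sum_univ_three] at hp1) hps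
  have l0 : lam 0 = (1+G2-G1)/3 := rfl
  have l1 : lam 1 = (2+G1-G2)/3 := rfl
  have l2 : lam 2 = 0 := rfl
  rw [l0, l1, l2] at heq
  have hM0 : p 1 - p 2 ≤ C3.payoff p := C3_le_payoff p 0
  have hM1 : p 2 - p 0 ≤ C3.payoff p := C3_le_payoff p 1
  have hs0 : 0 ≤ (1+G2-G1)/3 * (C3.payoff p - (p 1 - p 2)) := by
    apply mul_nonneg <;> linarith [hd.1, hd.2]
  have hs1 : 0 ≤ (2+G1-G2)/3 * (C3.payoff p - (p 2 - p 0)) := by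
    apply mul_nonneg <;> linarith [hd.1, hd.2]
  constructor
  · linarith [heq, hs0, hs1]
  · intro he
    rw [he] at heq
    have hz0 : (1+G2-G1)/3 * (C3.payoff p - (p 1 - p 2)) = 0 := by linarith
    have hz1 : (2+G1-G2)/3 * (C3.payoff p - (p 2 - p 0)) = 0 := by linarith
    have e0 : C3.payoff p = p 1 - p 2 := by
      rcases mul_eq_zero.1 hz0 with h|h
      · exfalso; linarith [hd.2]
      · linarith
    have e1 : C3.payoff p = p 2 - p 0 := by
      rcases mul_eq_zero.1 hz1 with h|h
      · exfalso; linarith [hd.1]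
      · linarith
    have hp0' : p 0 = 0 := by
      by_contra h; exact hps 0 h hx
    rw [Fin.sum_univ_three] at hp1
    have g1 : greedyPlay r 1 = 2/3 := by
      simp [greedyPlay, hx, hy, hz, fe11, fe12]
    have g2 : greedyPlay r 2 = 1/3 := by
      simp [greedyPlay, hx, hy, hz, fe21, fe22]
    have g0 : greedyPlay r 0 = 0 := by
      simp [greedyPlay, hx]
    funext u
    fin_cases u
    · show p 0 = greedyPlay r 0
      rw [g0, hp0']
    · show p 1 = greedyPlay r 1
      rw [g1]; linarith
    · show p 2 = greedyPlay r 2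
      rw [g2]; linarith

lemma key_case20 (r : Fin 3 → ℕ) (x z : ℕ) (hx : r 0 = x+1) (hy : r 1 = 0) (hz : r 2 = z+1)
    (p : Fin 3 → ℝ) (hp0 : ∀ u, 0 ≤ p u) (hp1 : ∑ u, p u = 1)
    (hps : ∀ u, p u ≠ 0 → r u ≠ 0) :
    Gr r ≤ C3.payoff p + ∑ u, p u * Gr (dsub r u) ∧
    (C3.payoff p + ∑ u, p u * Gr (dsub r u) = Gr r → p = greedyPlay r) := by
  set G2 := Gv (x+1) 0 z with hG2
  set G0 := Gv x 0 (z+1) with hG0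
  have hd : -2 < G2 - G0 ∧ G2 - G0 < 1 := by
    have e1 : G2 = Gv z (x+1) 0 := by
      rw [hG2, Gv_rot (x+1) 0 z, Gv_rot 0 z (x+1)]
    have e2 : G0 = Gv (z+1) x 0 := by
      rw [hG0, Gv_rot x 0 (z+1), Gv_rot 0 (z+1) x]
    rw [e1, e2]; exact Del_bounds z x
  have hGr : Gr r = 1/3 + 2/3 * G2 + 1/3 * G0 := by
    rw [Gr, hx, hy, hz]; simp [Gv]; rfl
  have hd2 : Gr (dsub r 2) = G2 := by rw [dsub2, hx, hy, hz]; simp; rfl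
  have hd0 : Gr (dsub r 0) = G0 := by rw [dsub0, hx, hy, hz]; simp; rfl
  set lam : Fin 3 → ℝ := ![0, (1+G0-G2)/3, (2+G2-G0)/3] with hlam
  have ht : ∀ u, r u ≠ 0 → Gr (dsub r u) = Gr r - lam (u+2) + lam (u+1) := by
    intro u hu
    fin_cases u
    · show Gr (dsub r 0) = Gr r - (2+G2-G0)/3 + (1+G0-G2)/3
      rw [hd0, hGr]; ring
    · exact absurd hy hu
    · show Gr (dsub r 2) = Gr r - (1+G0-G2)/3 + 0
      rw [hd2, hGr]; ring
  have heq := master r lam (by show 0 + (1+G0-G2)/3 + (2+G2-G0)/3 = 1; ring) ht p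
    (by rwa [Fin.sum_univ_three] at hp1) hps
  have l0 : lam 0 = 0 := rfl
  have l1 : lam 1 = (1+G0-G2)/3 := rfl
  have l2 : lam 2 = (2+G2-G0)/3 := rfl
  rw [l0, l1, l2] at heq
  have hM1 : p 2 - p 0 ≤ C3.payoff p := C3_le_payoff p 1
  have hM2 : p 0 - p 1 ≤ C3.payoff p := C3_le_payoff p 2
  have hs1 : 0 ≤ (1+G0-G2)/3 * (C3.payoff p - (p 2 - p 0)) := by
    apply mul_nonneg <;> linarith [hd.1, hd.2]
  have hs2 : 0 ≤ (2+G2-G0)/3 * (C3.payoff p - (p 0 - p 1)) := by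
    apply mul_nonneg <;> linarith [hd.1, hd.2]
  constructor
  · linarith [heq, hs1, hs2]
  · intro he
    rw [he] at heq
    have hz1 : (1+G0-G2)/3 * (C3.payoff p - (p 2 - p 0)) = 0 := by linarith
    have hz2 : (2+G2-G0)/3 * (C3.payoff p - (p 0 - p 1)) = 0 := by linarith
    have e1 : C3.payoff p = p 2 - p 0 := by
      rcases mul_eq_zero.1 hz1 with h|h
      · exfalso; linarith [hd.2]
      · linarith
    have e2 : C3.payoff p = p 0 - p 1 := by
      rcases mul_eq_zero.1 hz2 with h|h
      · exfalso; linarith [hd.1]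
      · linarith
    have hp1' : p 1 = 0 := by
      by_contra h; exact hps 1 h hy
    rw [Fin.sum_univ_three] at hp1
    have g2 : greedyPlay r 2 = 2/3 := by
      simp [greedyPlay, hx, hy, hz, fe21, fe22]
    have g0 : greedyPlay r 0 = 1/3 := by
      simp [greedyPlay, hx, hy, hz, fe01, fe02]
    have g1 : greedyPlay r 1 = 0 := by
      simp [greedyPlay, hy]
    funext u
    fin_cases u
    · show p 0 = greedyPlay r 0
      rw [g0]; linarith
    · show p 1 = greedyPlay r 1
      rw [g1, hp1']
    · show p 2 = greedyPlay r 2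
      rw [g2]; linarith

lemma key_case012 (r : Fin 3 → ℕ) (x y z : ℕ) (hx : r 0 = x+1) (hy : r 1 = y+1) (hz : r 2 = z+1)
    (p : Fin 3 → ℝ) (hp0 : ∀ u, 0 ≤ p u) (hp1 : ∑ u, p u = 1)
    (hps : ∀ u, p u ≠ 0 → r u ≠ 0) :
    Gr r ≤ C3.payoff p + ∑ u, p u * Gr (dsub r u) ∧
    (C3.payoff p + ∑ u, p u * Gr (dsub r u) = Gr r → p = greedyPlay r) := by
  set G0 := Gv x (y+1) (z+1) with hG0
  set G1 := Gv (x+1) y (z+1) with hG1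
  set G2 := Gv (x+1) (y+1) z with hG2
  have hb01 : -2 < G0 - G1 ∧ G0 - G1 < 1 := D0_bounds x y (z+1)
  have hb12 : -2 < G1 - G2 ∧ G1 - G2 < 1 := by
    have e1 : G1 = Gv y (z+1) (x+1) := Gv_rot (x+1) y (z+1)
    have e2 : G2 = Gv (y+1) z (x+1) := Gv_rot (x+1) (y+1) z
    rw [e1, e2]; exact D0_bounds y z (x+1)
  have hb20 : -2 < G2 - G0 ∧ G2 - G0 < 1 := by
    have e1 : G2 = Gv z (x+1) (y+1) := by
      rw [hG2, Gv_rot (x+1) (y+1) z, Gv_rot (y+1) z (x+1)]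
    have e2 : G0 = Gv (z+1) x (y+1) := by
      rw [hG0, Gv_rot x (y+1) (z+1), Gv_rot (y+1) (z+1) x]
    rw [e1, e2]; exact D0_bounds z x (y+1)
  have hGr : Gr r = 1/3 * G0 + 1/3 * G1 + 1/3 * G2 := by
    rw [Gr, hx, hy, hz]; simp [Gv]; rfl
  have hd0 : Gr (dsub r 0) = G0 := by rw [dsub0, hx, hy, hz]; simp; rfl
  have hd1 : Gr (dsub r 1) = G1 := by rw [dsub1, hx, hy, hz]; simp; rfl
  have hd2 : Gr (dsub r 2) = G2 := by rw [dsub2, hx, hy, hz]; simp; rfl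
  set lam : Fin 3 → ℝ := ![(1+G2-G1)/3, (1+G0-G2)/3, (1+G1-G0)/3] with hlam
  have ht : ∀ u, r u ≠ 0 → Gr (dsub r u) = Gr r - lam (u+2) + lam (u+1) := by
    intro u hu
    fin_cases u
    · show Gr (dsub r 0) = Gr r - (1+G1-G0)/3 + (1+G0-G2)/3
      rw [hd0, hGr]; ring
    · show Gr (dsub r 1) = Gr r - (1+G2-G1)/3 + (1+G1-G0)/3
      rw [hd1, hGr]; ring
    · show Gr (dsub r 2) = Gr r - (1+G0-G2)/3 + (1+G2-G1)/3
      rw [hd2, hGr]; ring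
  have heq := master r lam
    (by show (1+G2-G1)/3 + (1+G0-G2)/3 + (1+G1-G0)/3 = 1; ring) ht p
    (by rwa [Fin.sum_univ_three] at hp1) hps
  have l0 : lam 0 = (1+G2-G1)/3 := rfl
  have l1 : lam 1 = (1+G0-G2)/3 := rfl
  have l2 : lam 2 = (1+G1-G0)/3 := rfl
  rw [l0, l1, l2] at heq
  have hM0 : p 1 - p 2 ≤ C3.payoff p := C3_le_payoff p 0
  have hM1 : p 2 - p 0 ≤ C3.payoff p := C3_le_payoff p 1
  have hM2 : p 0 - p 1 ≤ C3.payoff p := C3_le_payoff p 2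
  have hs0 : 0 ≤ (1+G2-G1)/3 * (C3.payoff p - (p 1 - p 2)) := by
    apply mul_nonneg <;> linarith [hb12.2]
  have hs1 : 0 ≤ (1+G0-G2)/3 * (C3.payoff p - (p 2 - p 0)) := by
    apply mul_nonneg <;> linarith [hb20.2]
  have hs2 : 0 ≤ (1+G1-G0)/3 * (C3.payoff p - (p 0 - p 1)) := by
    apply mul_nonneg <;> linarith [hb01.2]
  constructor
  · linarith [heq, hs0, hs1, hs2]
  · intro he
    rw [he] at heq
    have hz0 : (1+G2-G1)/3 * (C3.payoff p - (p 1 - p 2)) = 0 := by linarith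
    have hz1 : (1+G0-G2)/3 * (C3.payoff p - (p 2 - p 0)) = 0 := by linarith
    have hz2 : (1+G1-G0)/3 * (C3.payoff p - (p 0 - p 1)) = 0 := by linarith
    have e0 : C3.payoff p = p 1 - p 2 := by
      rcases mul_eq_zero.1 hz0 with h|h
      · exfalso; linarith [hb12.2]
      · linarith
    have e1 : C3.payoff p = p 2 - p 0 := by
      rcases mul_eq_zero.1 hz1 with h|h
      · exfalso; linarith [hb20.2]
      · linarith
    have e2 : C3.payoff p = p 0 - p 1 := by
      rcases mul_eq_zero.1 hz2 with h|h
      · exfalso; linarith [hb01.2]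
      · linarith
    rw [Fin.sum_univ_three] at hp1
    have g0 : greedyPlay r 0 = 1/3 := by
      simp [greedyPlay, hx, hy, hz, fe01, fe02]
    have g1 : greedyPlay r 1 = 1/3 := by
      simp [greedyPlay, hx, hy, hz, fe11, fe12]
    have g2 : greedyPlay r 2 = 1/3 := by
      simp [greedyPlay, hx, hy, hz, fe21, fe22]
    funext u
    fin_cases u
    · show p 0 = greedyPlay r 0
      rw [g0]; linarith
    · show p 1 = greedyPlay r 1
      rw [g1]; linarith
    · show p 2 = greedyPlay r 2
      rw [g2]; linarith

lemma key_case0 (r : Fin 3 → ℕ) (x : ℕ) (hx : r 0 = x+1) (hy : r 1 = 0) (hz : r 2 = 0)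
    (p : Fin 3 → ℝ) (hp0 : ∀ u, 0 ≤ p u) (hp1 : ∑ u, p u = 1)
    (hps : ∀ u, p u ≠ 0 → r u ≠ 0) :
    Gr r ≤ C3.payoff p + ∑ u, p u * Gr (dsub r u) ∧
    (C3.payoff p + ∑ u, p u * Gr (dsub r u) = Gr r → p = greedyPlay r) := by
  have hGr : Gr r = (x:ℝ)+1 := by
    rw [Gr, hx, hy, hz, Gv_a00]; push_cast; ring
  have hd0 : Gr (dsub r 0) = (x:ℝ) := by rw [dsub0, hx, hy, hz]; simp [Gv_a00]
  set lam : Fin 3 → ℝ := ![0, 0, 1] with hlam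
  have ht : ∀ u, r u ≠ 0 → Gr (dsub r u) = Gr r - lam (u+2) + lam (u+1) := by
    intro u hu
    fin_cases u
    · show Gr (dsub r 0) = Gr r - 1 + 0
      rw [hd0, hGr]; ring
    · exact absurd hy hu
    · exact absurd hz hu
  have heq := master r lam (by show (0:ℝ) + 0 + 1 = 1; ring) ht p
    (by rwa [Fin.sum_univ_three] at hp1) hps
  have l0 : lam 0 = 0 := rfl
  have l1 : lam 1 = 0 := rfl
  have l2 : lam 2 = 1 := rfl
  rw [l0, l1, l2] at heq
  have hM2 : p 0 - p 1 ≤ C3.payoff p := C3_le_payoff p 2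
  have hp1' : p 1 = 0 := by by_contra h; exact hps 1 h hy
  have hp2' : p 2 = 0 := by by_contra h; exact hps 2 h hz
  rw [Fin.sum_univ_three] at hp1
  constructor
  · linarith [heq]
  · intro _
    have g0 : greedyPlay r 0 = 1 := by
      simp [greedyPlay, hx, hy, hz, fe01, fe02]
    have g1 : greedyPlay r 1 = 0 := by simp [greedyPlay, hy]
    have g2 : greedyPlay r 2 = 0 := by simp [greedyPlay, hz]
    funext u
    fin_cases u
    · show p 0 = greedyPlay r 0
      rw [g0]; linarith
    · show p 1 = greedyPlay r 1
      rw [g1, hp1']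
    · show p 2 = greedyPlay r 2
      rw [g2, hp2']

lemma key_case1 (r : Fin 3 → ℕ) (y : ℕ) (hx : r 0 = 0) (hy : r 1 = y+1) (hz : r 2 = 0)
    (p : Fin 3 → ℝ) (hp0 : ∀ u, 0 ≤ p u) (hp1 : ∑ u, p u = 1)
    (hps : ∀ u, p u ≠ 0 → r u ≠ 0) :
    Gr r ≤ C3.payoff p + ∑ u, p u * Gr (dsub r u) ∧
    (C3.payoff p + ∑ u, p u * Gr (dsub r u) = Gr r → p = greedyPlay r) := by
  have hGr : Gr r = (y:ℝ)+1 := by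
    rw [Gr, hx, hy, hz, Gv_0b0]; push_cast; ring
  have hd1 : Gr (dsub r 1) = (y:ℝ) := by rw [dsub1, hx, hy, hz]; simp [Gv_0b0]
  set lam : Fin 3 → ℝ := ![1, 0, 0] with hlam
  have ht : ∀ u, r u ≠ 0 → Gr (dsub r u) = Gr r - lam (u+2) + lam (u+1) := by
    intro u hu
    fin_cases u
    · exact absurd hx hu
    · show Gr (dsub r 1) = Gr r - 1 + 0
      rw [hd1, hGr]; ring
    · exact absurd hz hu
  have heq := master r lam (by show (1:ℝ) + 0 + 0 = 1; ring) ht p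
    (by rwa [Fin.sum_univ_three] at hp1) hps
  have l0 : lam 0 = 1 := rfl
  have l1 : lam 1 = 0 := rfl
  have l2 : lam 2 = 0 := rfl
  rw [l0, l1, l2] at heq
  have hM0 : p 1 - p 2 ≤ C3.payoff p := C3_le_payoff p 0
  have hp0' : p 0 = 0 := by by_contra h; exact hps 0 h hx
  have hp2' : p 2 = 0 := by by_contra h; exact hps 2 h hz
  rw [Fin.sum_univ_three] at hp1
  constructor
  · linarith [heq]
  · intro _
    have g1 : greedyPlay r 1 = 1 := by
      simp [greedyPlay, hx, hy, hz, fe11, fe12]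
    have g0 : greedyPlay r 0 = 0 := by simp [greedyPlay, hx]
    have g2 : greedyPlay r 2 = 0 := by simp [greedyPlay, hz]
    funext u
    fin_cases u
    · show p 0 = greedyPlay r 0
      rw [g0, hp0']
    · show p 1 = greedyPlay r 1
      rw [g1]; linarith
    · show p 2 = greedyPlay r 2
      rw [g2, hp2']

lemma Gv_00c (c : ℕ) : Gv 0 0 c = c := by
  rw [Gv_rot 0 0 c, Gv_0b0]

lemma key_case2 (r : Fin 3 → ℕ) (z : ℕ) (hx : r 0 = 0) (hy : r 1 = 0) (hz : r 2 = z+1)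
    (p : Fin 3 → ℝ) (hp0 : ∀ u, 0 ≤ p u) (hp1 : ∑ u, p u = 1)
    (hps : ∀ u, p u ≠ 0 → r u ≠ 0) :
    Gr r ≤ C3.payoff p + ∑ u, p u * Gr (dsub r u) ∧
    (C3.payoff p + ∑ u, p u * Gr (dsub r u) = Gr r → p = greedyPlay r) := by
  have hGr : Gr r = (z:ℝ)+1 := by
    rw [Gr, hx, hy, hz, Gv_00c]; push_cast; ring
  have hd2 : Gr (dsub r 2) = (z:ℝ) := by rw [dsub2, hx, hy, hz]; simp [Gv_00c]
  set lam : Fin 3 → ℝ := ![0, 1, 0] with hlam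
  have ht : ∀ u, r u ≠ 0 → Gr (dsub r u) = Gr r - lam (u+2) + lam (u+1) := by
    intro u hu
    fin_cases u
    · exact absurd hx hu
    · exact absurd hy hu
    · show Gr (dsub r 2) = Gr r - 1 + 0
      rw [hd2, hGr]; ring
  have heq := master r lam (by show (0:ℝ) + 1 + 0 = 1; ring) ht p
    (by rwa [Fin.sum_univ_three] at hp1) hps
  have l0 : lam 0 = 0 := rfl
  have l1 : lam 1 = 1 := rfl
  have l2 : lam 2 = 0 := rfl
  rw [l0, l1, l2] at heq
  have hM1 : p 2 - p 0 ≤ C3.payoff p := C3_le_payoff p 1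
  have hp0' : p 0 = 0 := by by_contra h; exact hps 0 h hx
  have hp1' : p 1 = 0 := by by_contra h; exact hps 1 h hy
  rw [Fin.sum_univ_three] at hp1
  constructor
  · linarith [heq]
  · intro _
    have g2 : greedyPlay r 2 = 1 := by
      simp [greedyPlay, hx, hy, hz, fe21, fe22]
    have g0 : greedyPlay r 0 = 0 := by simp [greedyPlay, hx]
    have g1 : greedyPlay r 1 = 0 := by simp [greedyPlay, hy]
    funext u
    fin_cases u
    · show p 0 = greedyPlay r 0
      rw [g0, hp0']
    · show p 1 = greedyPlay r 1
      rw [g1, hp1']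
    · show p 2 = greedyPlay r 2
      rw [g2]; linarith

lemma key (r : Fin 3 → ℕ) (hr : ¬ ∀ u, r u = 0)
    (p : Fin 3 → ℝ) (hp0 : ∀ u, 0 ≤ p u) (hp1 : ∑ u, p u = 1)
    (hps : ∀ u, p u ≠ 0 → r u ≠ 0) :
    Gr r ≤ C3.payoff p + ∑ u, p u * Gr (dsub r u) ∧
    (C3.payoff p + ∑ u, p u * Gr (dsub r u) = Gr r → p = greedyPlay r) := by
  rcases eq_or_ne (r 0) 0 with h0|h0 <;> rcases eq_or_ne (r 1) 0 with h1|h1 <;>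
    rcases eq_or_ne (r 2) 0 with h2|h2
  · exact absurd (fun u => by fin_cases u <;> assumption) hr
  · obtain ⟨z, hz⟩ : ∃ z, r 2 = z+1 := ⟨r 2 - 1, by omega⟩
    exact key_case2 r z h0 h1 hz p hp0 hp1 hps
  · obtain ⟨y, hy⟩ : ∃ y, r 1 = y+1 := ⟨r 1 - 1, by omega⟩
    exact key_case1 r y h0 hy h2 p hp0 hp1 hps
  · obtain ⟨y, hy⟩ : ∃ y, r 1 = y+1 := ⟨r 1 - 1, by omega⟩
    obtain ⟨z, hz⟩ : ∃ z, r 2 = z+1 := ⟨r 2 - 1, by omega⟩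
    exact key_case12 r y z h0 hy hz p hp0 hp1 hps
  · obtain ⟨x, hx⟩ : ∃ x, r 0 = x+1 := ⟨r 0 - 1, by omega⟩
    exact key_case0 r x hx h1 h2 p hp0 hp1 hps
  · obtain ⟨x, hx⟩ : ∃ x, r 0 = x+1 := ⟨r 0 - 1, by omega⟩
    obtain ⟨z, hz⟩ : ∃ z, r 2 = z+1 := ⟨r 2 - 1, by omega⟩
    exact key_case20 r x z hx h1 hz p hp0 hp1 hps
  · obtain ⟨x, hx⟩ : ∃ x, r 0 = x+1 := ⟨r 0 - 1, by omega⟩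
    obtain ⟨y, hy⟩ : ∃ y, r 1 = y+1 := ⟨r 1 - 1, by omega⟩
    exact key_case01 r x y hx hy h2 p hp0 hp1 hps
  · obtain ⟨x, hx⟩ : ∃ x, r 0 = x+1 := ⟨r 0 - 1, by omega⟩
    obtain ⟨y, hy⟩ : ∃ y, r 1 = y+1 := ⟨r 1 - 1, by omega⟩
    obtain ⟨z, hz⟩ : ∃ z, r 2 = z+1 := ⟨r 2 - 1, by omega⟩
    exact key_case012 r x y z hx hy hz p hp0 hp1 hps

lemma greedy_eq (r : Fin 3 → ℕ) (hr : ¬ ∀ u, r u = 0) :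
    C3.payoff (greedyPlay r) + ∑ u, greedyPlay r u * Gr (dsub r u) = Gr r := by
  rcases eq_or_ne (r 0) 0 with h0|h0 <;> rcases eq_or_ne (r 1) 0 with h1|h1 <;>
    rcases eq_or_ne (r 2) 0 with h2|h2
  · exact absurd (fun u => by fin_cases u <;> assumption) hr
  · -- supp {2}
    obtain ⟨z, hz⟩ : ∃ z, r 2 = z+1 := ⟨r 2 - 1, by omega⟩
    have g0 : greedyPlay r 0 = 0 := by simp [greedyPlay, h0]
    have g1 : greedyPlay r 1 = 0 := by simp [greedyPlay, h1]
    have g2 : greedyPlay r 2 = 1 := by simp [greedyPlay, h0, h1, hz, fe21, fe22]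
    have hpay : C3.payoff (greedyPlay r) = 1 := by
      refine C3_payoff_eq _ _ (fun v => ?_) 1 ?_
      · fin_cases v
        · show greedyPlay r 1 - greedyPlay r 2 ≤ 1
          rw [g1, g2]; norm_num
        · show greedyPlay r 2 - greedyPlay r 0 ≤ 1
          rw [g2, g0]; norm_num
        · show greedyPlay r 0 - greedyPlay r 1 ≤ 1
          rw [g0, g1]; norm_num
      · show greedyPlay r 2 - greedyPlay r 0 = 1
        rw [g2, g0]; norm_num
    have hd2 : Gr (dsub r 2) = (z:ℝ) := by rw [dsub2, h0, h1, hz]; simp [Gv_00c]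
    have hGr : Gr r = (z:ℝ)+1 := by rw [Gr, h0, h1, hz, Gv_00c]; push_cast; ring
    rw [Fin.sum_univ_three, g0, g1, g2, hpay, hd2, hGr]; ring
  · -- supp {1}
    obtain ⟨y, hy⟩ : ∃ y, r 1 = y+1 := ⟨r 1 - 1, by omega⟩
    have g0 : greedyPlay r 0 = 0 := by simp [greedyPlay, h0]
    have g2 : greedyPlay r 2 = 0 := by simp [greedyPlay, h2]
    have g1 : greedyPlay r 1 = 1 := by simp [greedyPlay, h0, h2, hy, fe11, fe12]
    have hpay : C3.payoff (greedyPlay r) = 1 := by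
      refine C3_payoff_eq _ _ (fun v => ?_) 0 ?_
      · fin_cases v
        · show greedyPlay r 1 - greedyPlay r 2 ≤ 1
          rw [g1, g2]; norm_num
        · show greedyPlay r 2 - greedyPlay r 0 ≤ 1
          rw [g2, g0]; norm_num
        · show greedyPlay r 0 - greedyPlay r 1 ≤ 1
          rw [g0, g1]; norm_num
      · show greedyPlay r 1 - greedyPlay r 2 = 1
        rw [g1, g2]; norm_num
    have hd1 : Gr (dsub r 1) = (y:ℝ) := by rw [dsub1, h0, hy, h2]; simp [Gv_0b0]
    have hGr : Gr r = (y:ℝ)+1 := by rw [Gr, h0, hy, h2, Gv_0b0]; push_cast; ring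
    rw [Fin.sum_univ_three, g0, g1, g2, hpay, hd1, hGr]; ring
  · -- supp {1,2}
    obtain ⟨y, hy⟩ : ∃ y, r 1 = y+1 := ⟨r 1 - 1, by omega⟩
    obtain ⟨z, hz⟩ : ∃ z, r 2 = z+1 := ⟨r 2 - 1, by omega⟩
    have g0 : greedyPlay r 0 = 0 := by simp [greedyPlay, h0]
    have g1 : greedyPlay r 1 = 2/3 := by simp [greedyPlay, h0, hy, hz, fe11, fe12]
    have g2 : greedyPlay r 2 = 1/3 := by simp [greedyPlay, h0, hy, hz, fe21, fe22]
    have hpay : C3.payoff (greedyPlay r) = 1/3 := by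
      refine C3_payoff_eq _ _ (fun v => ?_) 0 ?_
      · fin_cases v
        · show greedyPlay r 1 - greedyPlay r 2 ≤ 1/3
          rw [g1, g2]; norm_num
        · show greedyPlay r 2 - greedyPlay r 0 ≤ 1/3
          rw [g2, g0]; norm_num
        · show greedyPlay r 0 - greedyPlay r 1 ≤ 1/3
          rw [g0, g1]; norm_num
      · show greedyPlay r 1 - greedyPlay r 2 = 1/3
        rw [g1, g2]; norm_num
    have hd1 : Gr (dsub r 1) = Gv 0 y (z+1) := by rw [dsub1, h0, hy, hz]; simp
    have hd2 : Gr (dsub r 2) = Gv 0 (y+1) z := by rw [dsub2, h0, hy, hz]; simp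
    have hGr : Gr r = 1/3 + 2/3 * Gv 0 y (z+1) + 1/3 * Gv 0 (y+1) z := by
      rw [Gr, h0, hy, hz]; simp [Gv]
    rw [Fin.sum_univ_three, g0, g1, g2, hpay, hd1, hd2, hGr]; ring
  · -- supp {0}
    obtain ⟨x, hx⟩ : ∃ x, r 0 = x+1 := ⟨r 0 - 1, by omega⟩
    have g1 : greedyPlay r 1 = 0 := by simp [greedyPlay, h1]
    have g2 : greedyPlay r 2 = 0 := by simp [greedyPlay, h2]
    have g0 : greedyPlay r 0 = 1 := by simp [greedyPlay, hx, h1, h2, fe01, fe02]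
    have hpay : C3.payoff (greedyPlay r) = 1 := by
      refine C3_payoff_eq _ _ (fun v => ?_) 2 ?_
      · fin_cases v
        · show greedyPlay r 1 - greedyPlay r 2 ≤ 1
          rw [g1, g2]; norm_num
        · show greedyPlay r 2 - greedyPlay r 0 ≤ 1
          rw [g2, g0]; norm_num
        · show greedyPlay r 0 - greedyPlay r 1 ≤ 1
          rw [g0, g1]; norm_num
      · show greedyPlay r 0 - greedyPlay r 1 = 1
        rw [g0, g1]; norm_num
    have hd0 : Gr (dsub r 0) = (x:ℝ) := by rw [dsub0, hx, h1, h2]; simp [Gv_a00]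
    have hGr : Gr r = (x:ℝ)+1 := by rw [Gr, hx, h1, h2, Gv_a00]; push_cast; ring
    rw [Fin.sum_univ_three, g0, g1, g2, hpay, hd0, hGr]; ring
  · -- supp {2,0}
    obtain ⟨x, hx⟩ : ∃ x, r 0 = x+1 := ⟨r 0 - 1, by omega⟩
    obtain ⟨z, hz⟩ : ∃ z, r 2 = z+1 := ⟨r 2 - 1, by omega⟩
    have g1 : greedyPlay r 1 = 0 := by simp [greedyPlay, h1]
    have g2 : greedyPlay r 2 = 2/3 := by simp [greedyPlay, hx, h1, hz, fe21, fe22]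
    have g0 : greedyPlay r 0 = 1/3 := by simp [greedyPlay, hx, h1, hz, fe01, fe02]
    have hpay : C3.payoff (greedyPlay r) = 1/3 := by
      refine C3_payoff_eq _ _ (fun v => ?_) 1 ?_
      · fin_cases v
        · show greedyPlay r 1 - greedyPlay r 2 ≤ 1/3
          rw [g1, g2]; norm_num
        · show greedyPlay r 2 - greedyPlay r 0 ≤ 1/3
          rw [g2, g0]; norm_num
        · show greedyPlay r 0 - greedyPlay r 1 ≤ 1/3
          rw [g0, g1]; norm_num
      · show greedyPlay r 2 - greedyPlay r 0 = 1/3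
        rw [g2, g0]; norm_num
    have hd2 : Gr (dsub r 2) = Gv (x+1) 0 z := by rw [dsub2, hx, h1, hz]; simp
    have hd0 : Gr (dsub r 0) = Gv x 0 (z+1) := by rw [dsub0, hx, h1, hz]; simp
    have hGr : Gr r = 1/3 + 2/3 * Gv (x+1) 0 z + 1/3 * Gv x 0 (z+1) := by
      rw [Gr, hx, h1, hz]; simp [Gv]
    rw [Fin.sum_univ_three, g0, g1, g2, hpay, hd0, hd2, hGr]; ring
  · -- supp {0,1}
    obtain ⟨x, hx⟩ : ∃ x, r 0 = x+1 := ⟨r 0 - 1, by omega⟩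
    obtain ⟨y, hy⟩ : ∃ y, r 1 = y+1 := ⟨r 1 - 1, by omega⟩
    have g2 : greedyPlay r 2 = 0 := by simp [greedyPlay, h2]
    have g0 : greedyPlay r 0 = 2/3 := by simp [greedyPlay, hx, hy, h2, fe01, fe02]
    have g1 : greedyPlay r 1 = 1/3 := by simp [greedyPlay, hx, hy, h2, fe11, fe12]
    have hpay : C3.payoff (greedyPlay r) = 1/3 := by
      refine C3_payoff_eq _ _ (fun v => ?_) 0 ?_
      · fin_cases v
        · show greedyPlay r 1 - greedyPlay r 2 ≤ 1/3
          rw [g1, g2]; norm_num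
        · show greedyPlay r 2 - greedyPlay r 0 ≤ 1/3
          rw [g2, g0]; norm_num
        · show greedyPlay r 0 - greedyPlay r 1 ≤ 1/3
          rw [g0, g1]; norm_num
      · show greedyPlay r 1 - greedyPlay r 2 = 1/3
        rw [g1, g2]; norm_num
    have hd0 : Gr (dsub r 0) = Gv x (y+1) 0 := by rw [dsub0, hx, hy, h2]; simp
    have hd1 : Gr (dsub r 1) = Gv (x+1) y 0 := by rw [dsub1, hx, hy, h2]; simp
    have hGr : Gr r = 1/3 + 2/3 * Gv x (y+1) 0 + 1/3 * Gv (x+1) y 0 := by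
      rw [Gr, hx, hy, h2]; simp [Gv]
    rw [Fin.sum_univ_three, g0, g1, g2, hpay, hd0, hd1, hGr]; ring
  · -- full support
    obtain ⟨x, hx⟩ : ∃ x, r 0 = x+1 := ⟨r 0 - 1, by omega⟩
    obtain ⟨y, hy⟩ : ∃ y, r 1 = y+1 := ⟨r 1 - 1, by omega⟩
    obtain ⟨z, hz⟩ : ∃ z, r 2 = z+1 := ⟨r 2 - 1, by omega⟩
    have g0 : greedyPlay r 0 = 1/3 := by simp [greedyPlay, hx, hy, hz, fe01, fe02]
    have g1 : greedyPlay r 1 = 1/3 := by simp [greedyPlay, hx, hy, hz, fe11, fe12]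
    have g2 : greedyPlay r 2 = 1/3 := by simp [greedyPlay, hx, hy, hz, fe21, fe22]
    have hpay : C3.payoff (greedyPlay r) = 0 := by
      refine C3_payoff_eq _ _ (fun v => ?_) 0 ?_
      · fin_cases v
        · show greedyPlay r 1 - greedyPlay r 2 ≤ 0
          rw [g1, g2]; norm_num
        · show greedyPlay r 2 - greedyPlay r 0 ≤ 0
          rw [g2, g0]; norm_num
        · show greedyPlay r 0 - greedyPlay r 1 ≤ 0
          rw [g0, g1]; norm_num
      · show greedyPlay r 1 - greedyPlay r 2 = 0
        rw [g1, g2]; norm_num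
    have hd0 : Gr (dsub r 0) = Gv x (y+1) (z+1) := by rw [dsub0, hx, hy, hz]; simp
    have hd1 : Gr (dsub r 1) = Gv (x+1) y (z+1) := by rw [dsub1, hx, hy, hz]; simp
    have hd2 : Gr (dsub r 2) = Gv (x+1) (y+1) z := by rw [dsub2, hx, hy, hz]; simp
    have hGr : Gr r = 1/3 * Gv x (y+1) (z+1) + 1/3 * Gv (x+1) y (z+1)
        + 1/3 * Gv (x+1) (y+1) z := by
      rw [Gr, hx, hy, hz]; simp [Gv]
    rw [Fin.sum_univ_three, g0, g1, g2, hpay, hd0, hd1, hd2, hGr]; ring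


lemma sum_dsub (r : Fin 3 → ℕ) (u : Fin 3) (h : r u ≠ 0) :
    (∑ w, dsub r u w) + 1 = ∑ w, r w := by
  rw [Fin.sum_univ_three, Fin.sum_univ_three]
  fin_cases u
  · have h' : r 0 ≠ 0 := h
    simp [dsub]; omega
  · have h' : r 1 ≠ 0 := h
    simp [dsub]; omega
  · have h' : r 2 ≠ 0 := h
    simp [dsub]; omega

lemma Gr_zero (r : Fin 3 → ℕ) (h : ∀ u, r u = 0) : Gr r = 0 := by
  rw [Gr, h 0, h 1, h 2]; simp [Gv]

theorem valueAux_eq : ∀ n : ℕ, ∀ r : Fin 3 → ℕ, (∑ u, r u) ≤ n → C3.valueAux n r = Gr r := by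
  intro n
  induction n with
  | zero =>
      intro r hle
      have h : ∀ u, r u = 0 := by
        rw [Fin.sum_univ_three] at hle
        intro u
        fin_cases u
        · show r 0 = 0; omega
        · show r 1 = 0; omega
        · show r 2 = 0; omega
      rw [Gr_zero r h]
      rfl
  | succ n ih =>
      intro r hle
      by_cases hz : ∀ u, r u = 0
      · rw [Gr_zero r hz, Digraph'.valueAux, if_pos hz]
      · rw [Digraph'.valueAux, if_neg hz]
        have hrw : ∀ p : Fin 3 → ℝ, (∀ u, p u ≠ 0 → r u ≠ 0) →
            (∑ u, p u * C3.valueAux n (fun w => r w - if w = u then 1 else 0))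
              = ∑ u, p u * Gr (dsub r u) := by
          intro p hps
          apply Finset.sum_congr rfl
          intro u _
          rcases eq_or_ne (p u) 0 with h|h
          · rw [h]; ring
          · have hru := hps u h
            have hs := sum_dsub r u hru
            rw [show (fun w => r w - if w = u then 1 else 0) = dsub r u from rfl,
              ih (dsub r u) (by omega)]
        have hmem : (C3.payoff (greedyPlay r) + ∑ u, greedyPlay r u * Gr (dsub r u)) ∈
            { x : ℝ | ∃ p : Fin 3 → ℝ, (∀ u, 0 ≤ p u) ∧ (∑ u, p u = 1) ∧
              (∀ u, p u ≠ 0 → r u ≠ 0) ∧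
              x = C3.payoff p + ∑ u, p u * C3.valueAux n
                (fun w => r w - if w = u then 1 else 0) } := by
          refine ⟨greedyPlay r, greedy_nonneg r, greedy_sum r hz, greedy_supp r, ?_⟩
          rw [hrw (greedyPlay r) (greedy_supp r)]
        have hlb : ∀ x ∈ { x : ℝ | ∃ p : Fin 3 → ℝ, (∀ u, 0 ≤ p u) ∧ (∑ u, p u = 1) ∧
              (∀ u, p u ≠ 0 → r u ≠ 0) ∧
              x = C3.payoff p + ∑ u, p u * C3.valueAux n
                (fun w => r w - if w = u then 1 else 0) }, Gr r ≤ x := by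
          rintro x ⟨p, hp0, hp1, hps, rfl⟩
          rw [hrw p hps]
          exact (key r hz p hp0 hp1 hps).1
        apply le_antisymm
        · have h1 := csInf_le ⟨Gr r, hlb⟩ hmem
          rwa [greedy_eq r hz] at h1
        · exact le_csInf ⟨_, hmem⟩ hlb

theorem value_eq (r : Fin 3 → ℕ) : C3.value r = Gr r := valueAux_eq _ r le_rfl

noncomputable def Rg : ReiStrategy C3 where
  play := greedyPlay
  nonneg := fun r _ u => greedy_nonneg r u
  sum_one := fun r h => greedy_sum r h
  supp := fun r _ u => greedy_supp r u

theorem stratValueAux_Rg_eq : ∀ n : ℕ, ∀ r : Fin 3 → ℕ, (∑ u, r u) ≤ n →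
    C3.stratValueAux Rg n r = Gr r := by
  intro n
  induction n with
  | zero =>
      intro r hle
      have h : ∀ u, r u = 0 := by
        rw [Fin.sum_univ_three] at hle
        intro u
        fin_cases u
        · show r 0 = 0; omega
        · show r 1 = 0; omega
        · show r 2 = 0; omega
      rw [Gr_zero r h]
      rfl
  | succ n ih =>
      intro r hle
      by_cases hz : ∀ u, r u = 0
      · rw [Gr_zero r hz, Digraph'.stratValueAux, if_pos hz]
      · rw [Digraph'.stratValueAux, if_neg hz]
        have hrw : (∑ u, Rg.play r u * C3.stratValueAux Rg n
              (fun w => r w - if w = u then 1 else 0))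
            = ∑ u, greedyPlay r u * Gr (dsub r u) := by
          apply Finset.sum_congr rfl
          intro u _
          rcases eq_or_ne (greedyPlay r u) 0 with h|h
          · show greedyPlay r u * _ = greedyPlay r u * _
            rw [h]; ring
          · have hru := greedy_supp r u h
            have hs := sum_dsub r u hru
            show greedyPlay r u * _ = greedyPlay r u * _
            rw [show (fun w => r w - if w = u then 1 else 0) = dsub r u from rfl,
              ih (dsub r u) (by omega)]
        rw [hrw]
        exact greedy_eq r hz

theorem Rg_optimal : C3.IsOptimal Rg := by
  intro r
  rw [Digraph'.stratValue, value_eq, stratValueAux_Rg_eq _ r le_rfl]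

theorem Rg_unique (R : ReiStrategy C3) (hR : C3.IsOptimal R) (r : Fin 3 → ℕ)
    (hr : ¬ ∀ u, r u = 0) : R.play r = greedyPlay r := by
  obtain ⟨n, hn⟩ : ∃ n, ∑ u, r u = n + 1 := by
    push_neg at hr
    obtain ⟨u, hu⟩ := hr
    rw [Fin.sum_univ_three]
    fin_cases u
    · have h' : r 0 ≠ 0 := hu
      exact ⟨r 0 + r 1 + r 2 - 1, by omega⟩
    · have h' : r 1 ≠ 0 := hu
      exact ⟨r 0 + r 1 + r 2 - 1, by omega⟩
    · have h' : r 2 ≠ 0 := hu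
      exact ⟨r 0 + r 1 + r 2 - 1, by omega⟩
  have h1 : C3.stratValue R r = C3.payoff (R.play r) + ∑ u, R.play r u * Gr (dsub r u) := by
    rw [Digraph'.stratValue, hn, Digraph'.stratValueAux, if_neg hr]
    congr 1
    apply Finset.sum_congr rfl
    intro u _
    rcases eq_or_ne (R.play r u) 0 with h|h
    · rw [h]; ring
    · have hru := R.supp r hr u h
      have hs := sum_dsub r u hru
      rw [show (fun w => r w - if w = u then 1 else 0) = dsub r u from rfl]
      have h2 : C3.stratValueAux R n (dsub r u) = C3.stratValue R (dsub r u) := by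
        rw [Digraph'.stratValue, show (∑ w, dsub r u w) = n from by omega]
      rw [h2, hR (dsub r u), value_eq]
  have h2 : C3.stratValue R r = Gr r := by rw [hR r, value_eq]
  exact (key r hr (R.play r) (R.nonneg r hr) (R.sum_one r hr) (R.supp r hr)).2
    (by rw [← h1, h2])

theorem semiRestrictedRPS_greedy_unique_optimal :
    ∃ Rg : ReiStrategy C3, (∀ r : Fin 3 → ℕ, Rg.play r = greedyPlay r) ∧
      C3.IsOptimal Rg ∧
      ∀ R : ReiStrategy C3, C3.IsOptimal R →
        ∀ r : Fin 3 → ℕ, (¬ ∀ u, r u = 0) → R.play r = greedyPlay r := by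
  exact ⟨Rg, fun r => rfl, Rg_optimal, fun R hR r hr => Rg_unique R hR r hr⟩
end

section
/- Let D = C₃ be the directed 3-cycle on vertices {1,2,3} with arcs (1,2), (2,3), (3,1). There exist constants c, C > 0 such that for every integer n ≥ 1, c·√n ≤ S_D(n·1) ≤ C·√n, where n·1 is the restriction vector giving each vertex the value n. -/
open Finset

open Finset in
section
-- test payoff computation lemmas
lemma outN_C3 : ∀ v : Fin 3, C3.outN v = {v + 1} := by decide
lemma inN_C3 : ∀ v : Fin 3, C3.inN v = {v + 2} := by decide

lemma payoff_eq (p : Fin 3 → ℝ) :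
    C3.payoff p = sSup (Set.range fun v : Fin 3 => p (v + 1) - p (v + 2)) := by
  unfold Digraph'.payoff
  have : (fun v : Fin 3 => (∑ u ∈ C3.outN v, p u) - ∑ u ∈ C3.inN v, p u)
      = fun v : Fin 3 => p (v + 1) - p (v + 2) := by
    funext v
    rw [outN_C3, inN_C3, Finset.sum_singleton, Finset.sum_singleton]
  rw [this]

lemma payoff_entry (p : Fin 3 → ℝ) (v : Fin 3) : p (v + 1) - p (v + 2) ≤ C3.payoff p := by
  rw [payoff_eq]
  exact le_csSup (Set.Finite.bddAbove (Set.finite_range _)) ⟨v, rfl⟩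

lemma payoff_le (p : Fin 3 → ℝ) (x : ℝ) (h : ∀ v : Fin 3, p (v + 1) - p (v + 2) ≤ x) :
    C3.payoff p ≤ x := by
  rw [payoff_eq]
  exact csSup_le ⟨_, ⟨0, rfl⟩⟩ (by rintro y ⟨v, rfl⟩; exact h v)

lemma payoff_entry' (p : Fin 3 → ℝ) :
    (p 1 - p 2 ≤ C3.payoff p) ∧ (p 2 - p 0 ≤ C3.payoff p) ∧ (p 0 - p 1 ≤ C3.payoff p) := by
  exact ⟨payoff_entry p 0, payoff_entry p 1, payoff_entry p 2⟩

lemma payoff_nonneg (p : Fin 3 → ℝ) : 0 ≤ C3.payoff p := by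
  obtain ⟨h1, h2, h3⟩ := payoff_entry' p
  linarith
end
open Finset in
lemma payoff_le_vec (p : Fin 3 → ℝ) (x : ℝ) (h0 : p 1 - p 2 ≤ x) (h1 : p 2 - p 0 ≤ x)
    (h2 : p 0 - p 1 ≤ x) : C3.payoff p ≤ x := by
  apply payoff_le
  intro v
  fin_cases v
  · exact h0
  · exact h1
  · exact h2
namespace RPS

/-- decremented state -/
abbrev nb (r : Fin 3 → ℕ) (u : Fin 3) : Fin 3 → ℕ := fun w => r w - if w = u then 1 else 0

def sN (r : Fin 3 → ℕ) : ℕ := r 0 + r 1 + r 2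
def mN (r : Fin 3 → ℕ) : ℕ := min (r 0) (min (r 1) (r 2))

noncomputable def Qr (r : Fin 3 → ℕ) : ℝ :=
  ((r 0 : ℝ) - r 1)^2 + ((r 1 : ℝ) - r 2)^2 + ((r 2 : ℝ) - r 0)^2

noncomputable def Psi (r : Fin 3 → ℕ) : ℝ :=
  min ((sN r : ℝ) - mN r) (Real.sqrt (4 * (sN r : ℝ) + 2 * Qr r))

noncomputable def Phi (r : Fin 3 → ℕ) : ℝ :=
  max (max ((Real.sqrt ((sN r : ℝ) + Qr r) - 3) / 96) (((sN r : ℝ) - 3 * (mN r : ℝ)) / 6))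
    (if sN r = 0 then 0 else 1)

lemma sum_eq_sN (r : Fin 3 → ℕ) : (∑ u, r u) = sN r := by
  simp [Fin.sum_univ_three, sN]

lemma sum_nb (r : Fin 3 → ℕ) (u : Fin 3) (h : r u ≠ 0) : sN (nb r u) = sN r - 1 := by
  fin_cases u <;>
    (first | replace h : r 0 ≠ 0 := h | replace h : r 1 ≠ 0 := h | replace h : r 2 ≠ 0 := h) <;>
    simp [sN, nb, Fin.ext_iff] <;> omega

lemma Qr_nonneg (r : Fin 3 → ℕ) : 0 ≤ Qr r := by unfold Qr; positivity

lemma mN_le_sN (r : Fin 3 → ℕ) : mN r ≤ sN r := by unfold mN sN; omega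

lemma Psi_nonneg (r : Fin 3 → ℕ) : 0 ≤ Psi r := by
  unfold Psi
  refine le_min ?_ (Real.sqrt_nonneg _)
  have := mN_le_sN r
  have : (mN r : ℝ) ≤ sN r := by exact_mod_cast this
  linarith

lemma Phi_zero (r : Fin 3 → ℕ) (h : ∀ u, r u = 0) : Phi r ≤ 0 := by
  have hs : sN r = 0 := by simp [sN, h]
  have hq : Qr r = 0 := by simp [Qr, h]
  have hm : mN r = 0 := by simp [mN, h]
  unfold Phi
  rw [hs, hq, hm, if_pos rfl]
  norm_num

/-- Taylor lower bound for sqrt -/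
lemma sqrt_taylor (u h : ℝ) (hu : 0 < u) (hh : 0 ≤ u + h) :
    Real.sqrt u + h / (2 * Real.sqrt u) - h^2 / (2 * u * Real.sqrt u) ≤ Real.sqrt (u + h) := by
  set a := Real.sqrt u with ha
  set b := Real.sqrt (u + h) with hb
  have ha2 : a^2 = u := Real.sq_sqrt hu.le
  have hb2 : b^2 = u + h := Real.sq_sqrt hh
  have hap : 0 < a := Real.sqrt_pos.mpr hu
  have hbp : 0 ≤ b := Real.sqrt_nonneg _
  have key : 2*a^4 + a^2*h - h^2 ≤ 2*a^3*b := by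
    have hfac : 0 ≤ (a - b)^2 * (b^2 + 2*a*b) := by positivity
    nlinarith [hfac]
  rw [← ha2]
  have hne : a ≠ 0 := hap.ne'
  have eq1 : a + h/(2*a) - h^2/(2*a^2*a) = (2*a^4 + a^2*h - h^2)/(2*a^3) := by
    field_simp
  rw [eq1, div_le_iff₀ (by positivity : (0:ℝ) < 2*a^3)]
  nlinarith [key]

/-- Jensen for sqrt over 3 points -/
lemma sqrt_jensen3 (x y z : ℝ) (hx : 0 ≤ x) (hy : 0 ≤ y) (hz : 0 ≤ z) :
    Real.sqrt x + Real.sqrt y + Real.sqrt z ≤ 3 * Real.sqrt ((x + y + z)/3) := by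
  have hsx := Real.sq_sqrt hx
  have hsy := Real.sq_sqrt hy
  have hsz := Real.sq_sqrt hz
  have h1 := Real.sqrt_nonneg x
  have h2 := Real.sqrt_nonneg y
  have h3 := Real.sqrt_nonneg z
  have h4 := Real.sqrt_nonneg ((x+y+z)/3)
  have hs := Real.sq_sqrt (show (0:ℝ) ≤ (x+y+z)/3 by positivity)
  nlinarith [sq_nonneg (Real.sqrt x - Real.sqrt y), sq_nonneg (Real.sqrt y - Real.sqrt z),
    sq_nonneg (Real.sqrt x - Real.sqrt z),
    sq_nonneg (Real.sqrt x + Real.sqrt y + Real.sqrt z - 3 * Real.sqrt ((x+y+z)/3))]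

end RPS
namespace RPS

/-- Rei's explicit strategy depending on the zero pattern. -/
noncomputable def pstar (r : Fin 3 → ℕ) : Fin 3 → ℝ :=
  if r 0 ≠ 0 ∧ r 1 ≠ 0 ∧ r 2 ≠ 0 then fun _ => 1/3
  else if r 0 = 0 ∧ r 1 ≠ 0 ∧ r 2 ≠ 0 then ![0, 2/3, 1/3]
  else if r 1 = 0 ∧ r 2 ≠ 0 ∧ r 0 ≠ 0 then ![1/3, 0, 2/3]
  else if r 2 = 0 ∧ r 0 ≠ 0 ∧ r 1 ≠ 0 then ![2/3, 1/3, 0]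
  else if r 0 ≠ 0 then ![1, 0, 0]
  else if r 1 ≠ 0 then ![0, 1, 0]
  else ![0, 0, 1]

lemma pstar_valid (r : Fin 3 → ℕ) (hr : ¬ ∀ u, r u = 0) :
    (∀ u, 0 ≤ pstar r u) ∧ (∑ u, pstar r u = 1) ∧ (∀ u, pstar r u ≠ 0 → r u ≠ 0) := by
  have hr' : r 0 ≠ 0 ∨ r 1 ≠ 0 ∨ r 2 ≠ 0 := by
    by_contra hc
    push_neg at hc
    exact hr (fun u => by fin_cases u <;> simp [hc.1, hc.2.1, hc.2.2])
  refine ⟨?_, ?_, ?_⟩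
  · intro u
    unfold pstar
    split_ifs <;> fin_cases u <;> norm_num
  · unfold pstar
    split_ifs <;> simp [Fin.sum_univ_three] <;> norm_num
  · intro u hpu
    unfold pstar at hpu
    split_ifs at hpu with a b c d e f
    · fin_cases u <;> tauto
    · fin_cases u <;> simp at hpu <;> tauto
    · fin_cases u <;> simp at hpu <;> tauto
    · fin_cases u <;> simp at hpu <;> tauto
    · fin_cases u <;> simp at hpu <;> tauto
    · fin_cases u <;> simp at hpu <;> tauto
    · fin_cases u <;> simp at hpu <;> tauto

/-- the set appearing in valueAux is nonempty when r ≠ 0 -/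
lemma set_nonempty (n : ℕ) (r : Fin 3 → ℕ) (hr : ¬ ∀ u, r u = 0) :
    Set.Nonempty { x : ℝ | ∃ p : Fin 3 → ℝ, (∀ u, 0 ≤ p u) ∧ (∑ u, p u = 1) ∧
      (∀ u, p u ≠ 0 → r u ≠ 0) ∧
      x = C3.payoff p + ∑ u, p u * C3.valueAux n (fun w => r w - if w = u then 1 else 0) } := by
  obtain ⟨h1, h2, h3⟩ := pstar_valid r hr
  exact ⟨_, pstar r, h1, h2, h3, rfl⟩

lemma valueAux_nonneg (n : ℕ) (r : Fin 3 → ℕ) : 0 ≤ C3.valueAux n r := by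
  induction n generalizing r with
  | zero => simp [Digraph'.valueAux]
  | succ n ih =>
    rw [Digraph'.valueAux]
    split
    · exact le_refl 0
    · apply Real.sInf_nonneg
      rintro x ⟨p, hp1, hp2, hp3, rfl⟩
      have : 0 ≤ ∑ u, p u * C3.valueAux n (fun w => r w - if w = u then 1 else 0) :=
        Finset.sum_nonneg fun u _ => mul_nonneg (hp1 u) (ih _)
      have := payoff_nonneg p
      linarith

/-- upper bound by a potential -/
lemma valueAux_le_pot (Ψ : (Fin 3 → ℕ) → ℝ) (hΨ0 : ∀ r, 0 ≤ Ψ r)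
    (hstep : ∀ r : Fin 3 → ℕ, ¬(∀ u, r u = 0) → ∃ p : Fin 3 → ℝ,
      ((∀ u, 0 ≤ p u) ∧ (∑ u, p u = 1) ∧ (∀ u, p u ≠ 0 → r u ≠ 0)) ∧
      C3.payoff p + ∑ u, p u * Ψ (fun w => r w - if w = u then 1 else 0) ≤ Ψ r) :
    ∀ n r, C3.valueAux n r ≤ Ψ r := by
  intro n
  induction n with
  | zero => intro r; simpa [Digraph'.valueAux] using hΨ0 r
  | succ n ih =>
    intro r
    rw [Digraph'.valueAux]
    split
    · exact hΨ0 r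
    · rename_i hr
      obtain ⟨p, ⟨hp1, hp2, hp3⟩, hstep'⟩ := hstep r hr
      have hmem : C3.payoff p + ∑ u, p u * C3.valueAux n (fun w => r w - if w = u then 1 else 0)
          ∈ { x : ℝ | ∃ p : Fin 3 → ℝ, (∀ u, 0 ≤ p u) ∧ (∑ u, p u = 1) ∧
            (∀ u, p u ≠ 0 → r u ≠ 0) ∧
            x = C3.payoff p + ∑ u, p u * C3.valueAux n (fun w => r w - if w = u then 1 else 0) } :=
        ⟨p, hp1, hp2, hp3, rfl⟩
      have hbdd : BddBelow { x : ℝ | ∃ p : Fin 3 → ℝ, (∀ u, 0 ≤ p u) ∧ (∑ u, p u = 1) ∧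
            (∀ u, p u ≠ 0 → r u ≠ 0) ∧
            x = C3.payoff p + ∑ u, p u * C3.valueAux n (fun w => r w - if w = u then 1 else 0) } := by
        refine ⟨0, ?_⟩
        rintro x ⟨q, hq1, hq2, hq3, rfl⟩
        have : 0 ≤ ∑ u, q u * C3.valueAux n (fun w => r w - if w = u then 1 else 0) :=
          Finset.sum_nonneg fun u _ => mul_nonneg (hq1 u) (valueAux_nonneg _ _)
        have := payoff_nonneg q
        linarith
      have h2 : ∑ u, p u * C3.valueAux n (fun w => r w - if w = u then 1 else 0)
          ≤ ∑ u, p u * Ψ (fun w => r w - if w = u then 1 else 0) :=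
        Finset.sum_le_sum fun u _ => mul_le_mul_of_nonneg_left (ih _) (hp1 u)
      have := csInf_le hbdd hmem
      linarith

/-- lower bound by a potential -/
lemma pot_le_valueAux (Φ : (Fin 3 → ℕ) → ℝ)
    (hΦ0 : ∀ r : Fin 3 → ℕ, (∀ u, r u = 0) → Φ r ≤ 0)
    (hstep : ∀ r : Fin 3 → ℕ, ¬(∀ u, r u = 0) → ∀ p : Fin 3 → ℝ,
      (∀ u, 0 ≤ p u) → (∑ u, p u = 1) → (∀ u, p u ≠ 0 → r u ≠ 0) →
      Φ r ≤ C3.payoff p + ∑ u, p u * Φ (fun w => r w - if w = u then 1 else 0)) :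
    ∀ n r, sN r ≤ n → Φ r ≤ C3.valueAux n r := by
  intro n
  induction n with
  | zero =>
    intro r hr
    have : ∀ u, r u = 0 := by
      have hz : sN r = 0 := Nat.le_zero.mp hr
      have h0 : r 0 = 0 ∧ r 1 = 0 ∧ r 2 = 0 := by unfold sN at hz; omega
      intro u
      fin_cases u <;> (first | exact h0.1 | exact h0.2.1 | exact h0.2.2)
    simpa [Digraph'.valueAux] using hΦ0 r this
  | succ n ih =>
    intro r hr
    rw [Digraph'.valueAux]
    split
    · rename_i h; exact hΦ0 r h
    · rename_i h
      apply le_csInf (set_nonempty n r h)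
      rintro x ⟨p, hp1, hp2, hp3, rfl⟩
      refine le_trans (hstep r h p hp1 hp2 hp3) ?_
      have h2 : ∑ u, p u * Φ (fun w => r w - if w = u then 1 else 0)
          ≤ ∑ u, p u * C3.valueAux n (fun w => r w - if w = u then 1 else 0) := by
        apply Finset.sum_le_sum
        intro u _
        by_cases hpu : p u = 0
        · simp [hpu]
        · refine mul_le_mul_of_nonneg_left ?_ (hp1 u)
          apply ih
          rw [show (fun w => r w - if w = u then 1 else 0) = nb r u from rfl,
            sum_nb r u (hp3 u hpu)]
          have hs1 : 1 ≤ sN r := by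
            have h4 := hp3 u hpu
            fin_cases u <;>
              (first | replace h4 : r 0 ≠ 0 := h4 | replace h4 : r 1 ≠ 0 := h4 |
                replace h4 : r 2 ≠ 0 := h4) <;> unfold sN <;> omega
          omega
      linarith

end RPS
namespace RPS

lemma mN_zero_cases (r : Fin 3 → ℕ) (hm : mN r = 0) : r 0 = 0 ∨ r 1 = 0 ∨ r 2 = 0 := by
  unfold mN at hm; omega

lemma sqrt_bd (r : Fin 3 → ℕ) (hm : mN r = 0) :
    (sN r : ℝ) ≤ Real.sqrt (4 * (sN r : ℝ) + 2 * Qr r) := by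
  have key : ((sN r : ℝ))^2 ≤ 4 * (sN r : ℝ) + 2 * Qr r := by
    have hA : (0:ℝ) ≤ (r 0 : ℝ) := by positivity
    have hB : (0:ℝ) ≤ (r 1 : ℝ) := by positivity
    have hC : (0:ℝ) ≤ (r 2 : ℝ) := by positivity
    unfold sN Qr
    rcases mN_zero_cases r hm with h | h | h <;> rw [h] <;> push_cast <;>
      nlinarith [sq_nonneg ((r 0:ℝ) - r 1), sq_nonneg ((r 1:ℝ) - r 2), sq_nonneg ((r 2:ℝ) - r 0)]
  calc (sN r : ℝ) = Real.sqrt (((sN r : ℝ))^2) := (Real.sqrt_sq (by positivity)).symm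
    _ ≤ Real.sqrt (4 * (sN r : ℝ) + 2 * Qr r) := Real.sqrt_le_sqrt key

lemma sN_pos (r : Fin 3 → ℕ) (u : Fin 3) (hu : r u ≠ 0) : 1 ≤ sN r := by
  fin_cases u <;>
    (first | replace hu : r 0 ≠ 0 := hu | replace hu : r 1 ≠ 0 := hu |
      replace hu : r 2 ≠ 0 := hu) <;> unfold sN <;> omega

lemma Psi_nb_le (r : Fin 3 → ℕ) (u : Fin 3) (hu : r u ≠ 0) : Psi (nb r u) ≤ (sN r : ℝ) - 1 := by
  refine le_trans (min_le_left _ _) ?_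
  have h1 : sN (nb r u) = sN r - 1 := sum_nb r u hu
  have h2 : 1 ≤ sN r := sN_pos r u hu
  have h3 : (0:ℝ) ≤ (mN (nb r u) : ℝ) := by positivity
  have : (sN (nb r u) : ℝ) = (sN r : ℝ) - 1 := by
    rw [h1]; push_cast [Nat.cast_sub h2]; ring
  linarith

lemma upper_boundary (r : Fin 3 → ℕ) (p : Fin 3 → ℝ) (hm : mN r = 0) (hs : sN r ≠ 0)
    (hp1 : ∀ u, 0 ≤ p u) (hp2 : ∑ u, p u = 1) (hp3 : ∀ u, p u ≠ 0 → r u ≠ 0)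
    (hpay : C3.payoff p ≤ 1) :
    C3.payoff p + ∑ u, p u * Psi (nb r u) ≤ Psi r := by
  have hsum : ∑ u, p u * Psi (nb r u) ≤ (sN r : ℝ) - 1 := by
    have : ∀ u : Fin 3, p u * Psi (nb r u) ≤ p u * ((sN r : ℝ) - 1) := by
      intro u
      by_cases hpu : p u = 0
      · simp [hpu]
      · exact mul_le_mul_of_nonneg_left (Psi_nb_le r u (hp3 u hpu)) (hp1 u)
    calc ∑ u, p u * Psi (nb r u) ≤ ∑ u, p u * ((sN r : ℝ) - 1) :=
          Finset.sum_le_sum fun u _ => this u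
      _ = (sN r : ℝ) - 1 := by rw [← Finset.sum_mul, hp2, one_mul]
  refine le_min ?_ ?_
  · rw [hm]
    push_cast
    linarith
  · have := sqrt_bd r hm
    linarith

lemma upper_interior (r : Fin 3 → ℕ) (h0 : r 0 ≠ 0) (h1 : r 1 ≠ 0) (h2 : r 2 ≠ 0) :
    C3.payoff (fun _ => (1/3 : ℝ)) + ∑ u, (1/3 : ℝ) * Psi (nb r u) ≤ Psi r := by
  have hpay : C3.payoff (fun _ => (1/3:ℝ)) ≤ 0 := payoff_le _ _ (by intro v; norm_num)
  have ha : 1 ≤ r 0 := Nat.one_le_iff_ne_zero.mpr h0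
  have hb : 1 ≤ r 1 := Nat.one_le_iff_ne_zero.mpr h1
  have hc : 1 ≤ r 2 := Nat.one_le_iff_ne_zero.mpr h2
  set A := (r 0 : ℝ) with hA
  set B := (r 1 : ℝ) with hB
  set C' := (r 2 : ℝ) with hC
  have hA1 : 1 ≤ A := by rw [hA]; exact_mod_cast ha
  have hB1 : 1 ≤ B := by rw [hB]; exact_mod_cast hb
  have hC1 : 1 ≤ C' := by rw [hC]; exact_mod_cast hc
  -- evaluations of neighbors
  have e00 : ((nb r 0 0 : ℕ) : ℝ) = A - 1 := by
    simp [nb]; rw [Nat.cast_sub ha]; push_cast; ring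
  have e01 : ((nb r 0 1 : ℕ) : ℝ) = B := by simp [nb]; rfl
  have e02 : ((nb r 0 2 : ℕ) : ℝ) = C' := by simp [nb]; rfl
  have e10 : ((nb r 1 0 : ℕ) : ℝ) = A := by simp [nb]; rfl
  have e11 : ((nb r 1 1 : ℕ) : ℝ) = B - 1 := by
    simp [nb]; rw [Nat.cast_sub hb]; push_cast; ring
  have e12 : ((nb r 1 2 : ℕ) : ℝ) = C' := by simp [nb]; rfl
  have e20 : ((nb r 2 0 : ℕ) : ℝ) = A := by simp [nb]; rfl
  have e21 : ((nb r 2 1 : ℕ) : ℝ) = B := by simp [nb]; rfl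
  have e22 : ((nb r 2 2 : ℕ) : ℝ) = C' - 1 := by
    simp [nb]; rw [Nat.cast_sub hc]; push_cast; ring
  have hsr : (sN r : ℝ) = A + B + C' := by unfold sN; push_cast; ring
  have hsn : ∀ u : Fin 3, r u ≠ 0 → (sN (nb r u) : ℝ) = A + B + C' - 1 := by
    intro u hu
    rw [sum_nb r u hu]
    rw [Nat.cast_sub (sN_pos r u hu), hsr]
    norm_num
  have hQr : Qr r = (A - B)^2 + (B - C')^2 + (C' - A)^2 := by unfold Qr; ring
  have hQ0 : Qr (nb r 0) = (A - 1 - B)^2 + (B - C')^2 + (C' - (A-1))^2 := by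
    unfold Qr; rw [e00, e01, e02]
  have hQ1 : Qr (nb r 1) = (A - (B-1))^2 + (B - 1 - C')^2 + (C' - A)^2 := by
    unfold Qr; rw [e10, e11, e12]
  have hQ2 : Qr (nb r 2) = (A - B)^2 + (B - (C'-1))^2 + (C' - 1 - A)^2 := by
    unfold Qr; rw [e20, e21, e22]
  -- linear-part bound
  have lin : ∀ u : Fin 3, r u ≠ 0 → Psi (nb r u) ≤ (sN r : ℝ) - (mN r : ℝ) := by
    intro u hu
    refine le_trans (min_le_left _ _) ?_
    have hmm : mN r ≤ mN (nb r u) + 1 := by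
      fin_cases u <;> simp [mN, nb, Fin.ext_iff] <;> omega
    have : (mN r : ℝ) ≤ (mN (nb r u) : ℝ) + 1 := by exact_mod_cast hmm
    have h4 := hsn u hu
    linarith
  -- diffusive part
  have diff : Psi (nb r 0) + Psi (nb r 1) + Psi (nb r 2)
      ≤ 3 * Real.sqrt (4 * (sN r:ℝ) + 2 * Qr r) := by
    have b0 : Psi (nb r 0) ≤ Real.sqrt (4 * (sN (nb r 0):ℝ) + 2 * Qr (nb r 0)) :=
      min_le_right _ _
    have b1 : Psi (nb r 1) ≤ Real.sqrt (4 * (sN (nb r 1):ℝ) + 2 * Qr (nb r 1)) :=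
      min_le_right _ _
    have b2 : Psi (nb r 2) ≤ Real.sqrt (4 * (sN (nb r 2):ℝ) + 2 * Qr (nb r 2)) :=
      min_le_right _ _
    have hj := sqrt_jensen3 (4 * (sN (nb r 0):ℝ) + 2 * Qr (nb r 0))
      (4 * (sN (nb r 1):ℝ) + 2 * Qr (nb r 1)) (4 * (sN (nb r 2):ℝ) + 2 * Qr (nb r 2))
      (by have := Qr_nonneg (nb r 0); have h9 : (0:ℝ) ≤ (sN (nb r 0) : ℝ) := (by positivity); linarith)
      (by have := Qr_nonneg (nb r 1); have h9 : (0:ℝ) ≤ (sN (nb r 1) : ℝ) := (by positivity); linarith)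
      (by have := Qr_nonneg (nb r 2); have h9 : (0:ℝ) ≤ (sN (nb r 2) : ℝ) := (by positivity); linarith)
    have hid : (4 * (sN (nb r 0):ℝ) + 2 * Qr (nb r 0) + (4 * (sN (nb r 1):ℝ) + 2 * Qr (nb r 1))
        + (4 * (sN (nb r 2):ℝ) + 2 * Qr (nb r 2)))/3 = 4 * (sN r:ℝ) + 2 * Qr r := by
      rw [hsn 0 h0, hsn 1 h1, hsn 2 h2, hQ0, hQ1, hQ2, hQr, hsr]
      ring
    rw [hid] at hj
    linarith
  rw [Fin.sum_univ_three]
  refine le_min ?_ ?_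
  · have l0 := lin 0 h0
    have l1 := lin 1 h1
    have l2 := lin 2 h2
    linarith
  · linarith

lemma upper_step (r : Fin 3 → ℕ) (hr : ¬ ∀ u, r u = 0) :
    C3.payoff (pstar r) + ∑ u, pstar r u * Psi (nb r u) ≤ Psi r := by
  by_cases h0 : r 0 = 0 <;> by_cases h1 : r 1 = 0 <;> by_cases h2 : r 2 = 0
  · exact absurd (fun u => by fin_cases u <;> assumption) hr
  · -- only r2 ≠ 0 : p = ![0,0,1]
    have hps : pstar r = ![0, 0, 1] := by unfold pstar; simp [h0, h1, h2]
    rw [hps]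
    refine upper_boundary r _ (by unfold mN; omega) (by unfold sN at *; omega)
      (by intro u; fin_cases u <;> simp <;> norm_num) (by simp [Fin.sum_univ_three])
      (by intro u; fin_cases u <;> simp [h2]) ?_
    exact payoff_le_vec _ _ (by norm_num [Matrix.cons_val_two, Matrix.vecHead, Matrix.vecTail]) (by norm_num [Matrix.cons_val_two, Matrix.vecHead, Matrix.vecTail]) (by norm_num [Matrix.cons_val_two, Matrix.vecHead, Matrix.vecTail])
  · -- only r1 ≠ 0 : p = ![0,1,0]
    have hps : pstar r = ![0, 1, 0] := by unfold pstar; simp [h0, h1, h2]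
    rw [hps]
    refine upper_boundary r _ (by unfold mN; omega) (by unfold sN at *; omega)
      (by intro u; fin_cases u <;> simp <;> norm_num) (by simp [Fin.sum_univ_three])
      (by intro u; fin_cases u <;> simp [h1]) ?_
    exact payoff_le_vec _ _ (by norm_num [Matrix.cons_val_two, Matrix.vecHead, Matrix.vecTail]) (by norm_num [Matrix.cons_val_two, Matrix.vecHead, Matrix.vecTail]) (by norm_num [Matrix.cons_val_two, Matrix.vecHead, Matrix.vecTail])
  · -- r0 = 0, others ≠ 0: p = ![0,2/3,1/3]
    have hps : pstar r = ![0, 2/3, 1/3] := by unfold pstar; simp [h0, h1, h2]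
    rw [hps]
    refine upper_boundary r _ (by unfold mN; omega) (by unfold sN at *; omega)
      (by intro u; fin_cases u <;> simp <;> norm_num) (by simp [Fin.sum_univ_three]; norm_num)
      (by intro u; fin_cases u <;> simp [h1, h2]) ?_
    exact payoff_le_vec _ _ (by norm_num [Matrix.cons_val_two, Matrix.vecHead, Matrix.vecTail]) (by norm_num [Matrix.cons_val_two, Matrix.vecHead, Matrix.vecTail]) (by norm_num [Matrix.cons_val_two, Matrix.vecHead, Matrix.vecTail])
  · -- only r0 ≠ 0: p = ![1,0,0]
    have hps : pstar r = ![1, 0, 0] := by unfold pstar; simp [h0, h1, h2]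
    rw [hps]
    refine upper_boundary r _ (by unfold mN; omega) (by unfold sN at *; omega)
      (by intro u; fin_cases u <;> simp <;> norm_num) (by simp [Fin.sum_univ_three])
      (by intro u; fin_cases u <;> simp [h0]) ?_
    exact payoff_le_vec _ _ (by norm_num [Matrix.cons_val_two, Matrix.vecHead, Matrix.vecTail]) (by norm_num [Matrix.cons_val_two, Matrix.vecHead, Matrix.vecTail]) (by norm_num [Matrix.cons_val_two, Matrix.vecHead, Matrix.vecTail])
  · -- r1 = 0, others ≠ 0 : p = ![1/3, 0, 2/3]
    have hps : pstar r = ![1/3, 0, 2/3] := by unfold pstar; simp [h0, h1, h2]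
    rw [hps]
    refine upper_boundary r _ (by unfold mN; omega) (by unfold sN at *; omega)
      (by intro u; fin_cases u <;> simp <;> norm_num) (by simp [Fin.sum_univ_three]; norm_num)
      (by intro u; fin_cases u <;> simp [h0, h2]) ?_
    exact payoff_le_vec _ _ (by norm_num [Matrix.cons_val_two, Matrix.vecHead, Matrix.vecTail]) (by norm_num [Matrix.cons_val_two, Matrix.vecHead, Matrix.vecTail]) (by norm_num [Matrix.cons_val_two, Matrix.vecHead, Matrix.vecTail])
  · -- r2 = 0, others ≠ 0 : p = ![2/3, 1/3, 0]
    have hps : pstar r = ![2/3, 1/3, 0] := by unfold pstar; simp [h0, h1, h2]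
    rw [hps]
    refine upper_boundary r _ (by unfold mN; omega) (by unfold sN at *; omega)
      (by intro u; fin_cases u <;> simp <;> norm_num) (by simp [Fin.sum_univ_three]; norm_num)
      (by intro u; fin_cases u <;> simp [h0, h1]) ?_
    exact payoff_le_vec _ _ (by norm_num [Matrix.cons_val_two, Matrix.vecHead, Matrix.vecTail]) (by norm_num [Matrix.cons_val_two, Matrix.vecHead, Matrix.vecTail]) (by norm_num [Matrix.cons_val_two, Matrix.vecHead, Matrix.vecTail])
  · -- interior
    have hps : pstar r = fun _ => (1/3 : ℝ) := by unfold pstar; simp [h0, h1, h2]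
    rw [hps]
    exact upper_interior r h0 h1 h2

end RPS
namespace RPS

lemma payoff_ge_third (p : Fin 3 → ℝ) (hp2 : ∑ u, p u = 1) (u : Fin 3) :
    1/3 - p u ≤ C3.payoff p := by
  obtain ⟨e0, e1, e2⟩ := payoff_entry' p
  rw [Fin.sum_univ_three] at hp2
  fin_cases u <;>
    (first | (show 1/3 - p 0 ≤ _) | (show 1/3 - p 1 ≤ _) | (show 1/3 - p 2 ≤ _)) <;> linarith

def maxN (r : Fin 3 → ℕ) : ℕ := max (r 0) (max (r 1) (r 2))

lemma Phi_ge_1 (r : Fin 3 → ℕ) : (Real.sqrt ((sN r : ℝ) + Qr r) - 3)/96 ≤ Phi r :=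
  le_trans (le_max_left _ _) (le_max_left _ _)

lemma Phi_ge_2 (r : Fin 3 → ℕ) : ((sN r : ℝ) - 3*(mN r : ℝ))/6 ≤ Phi r :=
  le_trans (le_max_right _ _) (le_max_left _ _)

lemma Phi_ge_3 (r : Fin 3 → ℕ) (h : sN r ≠ 0) : (1:ℝ) ≤ Phi r := by
  refine le_trans ?_ (le_max_right _ _)
  rw [if_neg h]

lemma Phi_nonneg (r : Fin 3 → ℕ) : 0 ≤ Phi r := by
  refine le_trans ?_ (Phi_ge_2 r)
  have h : 3 * mN r ≤ sN r := by unfold mN sN; omega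
  have : (3 * mN r : ℝ) ≤ (sN r : ℝ) := by exact_mod_cast h
  push_cast at this
  linarith

lemma sq_ge_one (x y : ℕ) (h : x ≠ y) : 1 ≤ ((x:ℝ) - y)^2 := by
  have h' : x + 1 ≤ y ∨ y + 1 ≤ x := by omega
  rcases h' with h' | h'
  · have : (x:ℝ) + 1 ≤ (y:ℝ) := by exact_mod_cast h'
    nlinarith
  · have : (y:ℝ) + 1 ≤ (x:ℝ) := by exact_mod_cast h'
    nlinarith

lemma u_ge_3 (r : Fin 3 → ℕ) (hr : ¬ ∀ u, r u = 0) : 3 ≤ (sN r : ℝ) + Qr r := by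
  have hs1 : 1 ≤ sN r := by
    by_contra hc
    refine hr fun u => ?_
    have h0 : r 0 = 0 ∧ r 1 = 0 ∧ r 2 = 0 := by unfold sN at hc; omega
    fin_cases u <;> (first | exact h0.1 | exact h0.2.1 | exact h0.2.2)
  have hs1' : (1:ℝ) ≤ (sN r : ℝ) := by exact_mod_cast hs1
  have hQ := Qr_nonneg r
  by_cases heq : r 0 = r 1 ∧ r 1 = r 2
  · have h3 : 3 ≤ sN r := by unfold sN at *; omega
    have : (3:ℝ) ≤ (sN r:ℝ) := by exact_mod_cast h3
    linarith
  · have h2 : 2 ≤ Qr r := by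
      unfold Qr
      by_cases h01 : r 0 = r 1
      · have h12 : r 1 ≠ r 2 := fun hc => heq ⟨h01, hc⟩
        have h20 : r 2 ≠ r 0 := by omega
        have := sq_ge_one (r 1) (r 2) h12
        have := sq_ge_one (r 2) (r 0) h20
        have := sq_nonneg ((r 0 : ℝ) - r 1)
        linarith
      · by_cases h12 : r 1 = r 2
        · have h20 : r 2 ≠ r 0 := by omega
          have := sq_ge_one (r 0) (r 1) h01
          have := sq_ge_one (r 2) (r 0) h20
          have := sq_nonneg ((r 1 : ℝ) - r 2)
          linarith
        · have := sq_ge_one (r 0) (r 1) h01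
          have := sq_ge_one (r 1) (r 2) h12
          have := sq_nonneg ((r 2 : ℝ) - r 0)
          linarith
    linarith

lemma unb_eq (r : Fin 3 → ℕ) (v : Fin 3) (h : r v ≠ 0) :
    (sN (nb r v) : ℝ) + Qr (nb r v)
      = ((sN r : ℝ) + Qr r) + 1 + 2*((sN r : ℝ) - 3*(r v : ℝ)) := by
  have hs : (sN (nb r v) : ℝ) = (sN r : ℝ) - 1 := by
    rw [sum_nb r v h, Nat.cast_sub (sN_pos r v h)]
    norm_num
  rw [hs]
  have hQ : Qr (nb r v) = Qr r + 2 + 2*((sN r:ℝ) - 3*(r v:ℝ)) := by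
    have hsr : (sN r : ℝ) = (r 0 : ℝ) + r 1 + r 2 := by unfold sN; push_cast; ring
    fin_cases v
    · replace h : r 0 ≠ 0 := h
      have e : ((r 0 - 1 : ℕ) : ℝ) = (r 0 : ℝ) - 1 := by
        rw [Nat.cast_sub (by omega)]; norm_num
      show Qr (nb r 0) = Qr r + 2 + 2*((sN r:ℝ) - 3*(r 0:ℝ))
      unfold Qr nb
      simp only [Fin.isValue, show ((0:Fin 3) = 0) ↔ True by simp,
        show ((1:Fin 3) = 0) ↔ False by simp [Fin.ext_iff],
        show ((2:Fin 3) = 0) ↔ False by simp [Fin.ext_iff], if_true, if_false]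
      norm_num [e]
      rw [hsr]; ring
    · replace h : r 1 ≠ 0 := h
      have e : ((r 1 - 1 : ℕ) : ℝ) = (r 1 : ℝ) - 1 := by
        rw [Nat.cast_sub (by omega)]; norm_num
      show Qr (nb r 1) = Qr r + 2 + 2*((sN r:ℝ) - 3*(r 1:ℝ))
      unfold Qr nb
      simp only [Fin.isValue, show ((1:Fin 3) = 1) ↔ True by simp,
        show ((0:Fin 3) = 1) ↔ False by simp [Fin.ext_iff],
        show ((2:Fin 3) = 1) ↔ False by simp [Fin.ext_iff], if_true, if_false]
      norm_num [e]
      rw [hsr]; ring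
    · replace h : r 2 ≠ 0 := h
      have e : ((r 2 - 1 : ℕ) : ℝ) = (r 2 : ℝ) - 1 := by
        rw [Nat.cast_sub (by omega)]; norm_num
      show Qr (nb r 2) = Qr r + 2 + 2*((sN r:ℝ) - 3*(r 2:ℝ))
      unfold Qr nb
      simp only [Fin.isValue, show ((2:Fin 3) = 2) ↔ True by simp,
        show ((0:Fin 3) = 2) ↔ False by simp [Fin.ext_iff],
        show ((1:Fin 3) = 2) ↔ False by simp [Fin.ext_iff], if_true, if_false]
      norm_num [e]
      rw [hsr]; ring
  rw [hQ]; ring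

end RPS
namespace RPS

lemma mN_le (r : Fin 3 → ℕ) (i : Fin 3) : mN r ≤ r i := by
  fin_cases i <;>
    (first | (show mN r ≤ r 0) | (show mN r ≤ r 1) | (show mN r ≤ r 2)) <;>
    (unfold mN; omega)

lemma le_maxN (r : Fin 3 → ℕ) (i : Fin 3) : r i ≤ maxN r := by
  fin_cases i <;>
    (first | (show r 0 ≤ maxN r) | (show r 1 ≤ maxN r) | (show r 2 ≤ maxN r)) <;>
    (unfold maxN; omega)

lemma nb_ge (r : Fin 3 → ℕ) (u i : Fin 3) : r i - 1 ≤ nb r u i := by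
  show r i - 1 ≤ r i - (if i = u then 1 else 0)
  split <;> omega

lemma nb_le (r : Fin 3 → ℕ) (u i : Fin 3) : nb r u i ≤ r i := Nat.sub_le _ _

lemma sN_nb_ge (r : Fin 3 → ℕ) (u : Fin 3) : sN r - 1 ≤ sN (nb r u) := by
  fin_cases u <;> simp [sN, nb, Fin.ext_iff] <;> omega

lemma mN_nb_min (r : Fin 3 → ℕ) (u : Fin 3) (hmin : r u = mN r) (hm : 1 ≤ mN r) :
    mN (nb r u) = mN r - 1 := by
  fin_cases u <;>
    (first | replace hmin : r 0 = mN r := hmin | replace hmin : r 1 = mN r := hmin |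
      replace hmin : r 2 = mN r := hmin) <;>
    (simp only [mN, nb, Fin.ext_iff] at hmin hm ⊢; simp; omega)

lemma mN_nb_le (r : Fin 3 → ℕ) (u : Fin 3) : mN (nb r u) ≤ mN r := by
  have h0 := nb_le r u 0
  have h1 := nb_le r u 1
  have h2 := nb_le r u 2
  unfold mN at *
  omega


lemma hterm_aux (q x M P : ℝ) (h1 : x ≤ 2*M) (h2 : -(2*M) ≤ x) (h3 : q ≤ 2*P)
    (h4 : -P ≤ q) (hP : 0 ≤ P) (hM : 0 ≤ M) : -(4*M*P) ≤ q*x ∧ q*x ≤ 4*M*P := by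
  constructor
  · nlinarith [mul_nonneg (by linarith : (0:ℝ) ≤ 2*P - q) (by linarith : (0:ℝ) ≤ 2*M - x),
      mul_nonneg (by linarith : (0:ℝ) ≤ 2*P + q) (by linarith : (0:ℝ) ≤ 2*M + x)]
  · nlinarith [mul_nonneg (by linarith : (0:ℝ) ≤ 2*P - q) (by linarith : (0:ℝ) ≤ 2*M + x),
      mul_nonneg (by linarith : (0:ℝ) ≤ 2*P + q) (by linarith : (0:ℝ) ≤ 2*M - x)]

lemma sq_bound_aux (x M : ℝ) (h1 : x ≤ 2*M) (h2 : -(2*M) ≤ x) : x^2 ≤ 4*M^2 := by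
  nlinarith [mul_nonneg (by linarith : (0:ℝ) ≤ 2*M - x) (by linarith : (0:ℝ) ≤ 2*M + x)]

lemma chain_aux (A1 A2 M P u squ : ℝ) (h1 : A1 ≤ 12*M*P) (h2 : -(12*M*P) ≤ A1)
    (h3 : A2 ≤ 4*M^2) (hM0 : 0 ≤ M) (hP0 : 0 ≤ P) (hu3 : 3 ≤ u)
    (hsq2 : squ^2 = u) (hsqpos : 0 < squ) (hM16 : 16*M ≤ squ) :
    (1 + 4*A1 + 4*A2) - (1 + 2*A1)*u ≤ 192*P*u*squ := by
  have hu0 : (0:ℝ) ≤ u := by linarith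
  have hMsq : 256*M^2 ≤ u := by
    have hfac := mul_nonneg (sub_nonneg.mpr hM16) (by linarith : (0:ℝ) ≤ squ + 16*M)
    nlinarith [hfac]
  have hsp : (0:ℝ) ≤ squ*P := mul_nonneg hsqpos.le hP0
  have husp : (0:ℝ) ≤ u*(squ*P) := mul_nonneg hu0 hsp
  have m1 : 16*M*P ≤ squ*P := by
    have := mul_le_mul_of_nonneg_right hM16 hP0
    linarith
  have m2 : 3*(squ*P) ≤ u*(squ*P) := by
    have := mul_le_mul_of_nonneg_right hu3 hsp
    linarith
  have e1 : 4*A1 ≤ u*(squ*P) := by linarith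
  have m3 : 16*M*P*u ≤ squ*P*u := mul_le_mul_of_nonneg_right m1 hu0
  have m4 : -A1*u ≤ 12*M*P*u :=
    mul_le_mul_of_nonneg_right (by linarith : -A1 ≤ 12*M*P) hu0
  have e2 : -(2*A1)*u ≤ (3/2)*(u*(squ*P)) := by nlinarith [m3, m4]
  have e3 : 4*A2 ≤ u/16 := by linarith
  nlinarith [e1, e2, e3, husp]

set_option maxHeartbeats 1000000 in
lemma lower_step (r : Fin 3 → ℕ) (hr : ¬ ∀ u, r u = 0) (p : Fin 3 → ℝ)
    (hp1 : ∀ u, 0 ≤ p u) (hp2 : ∑ u, p u = 1) (hp3 : ∀ u, p u ≠ 0 → r u ≠ 0) :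
    Phi r ≤ C3.payoff p + ∑ u, p u * Phi (nb r u) := by
  have hs1 : 1 ≤ sN r := by
    by_contra hc
    refine hr fun u => ?_
    have h0 : r 0 = 0 ∧ r 1 = 0 ∧ r 2 = 0 := by unfold sN at hc; omega
    fin_cases u <;> (first | exact h0.1 | exact h0.2.1 | exact h0.2.2)
  obtain ⟨P, hPdef⟩ : ∃ x : ℝ, x = C3.payoff p := ⟨_, rfl⟩
  rw [← hPdef]
  have hP0 : 0 ≤ P := hPdef ▸ payoff_nonneg p
  have hPv : ∀ u, 1/3 - p u ≤ P := fun u => hPdef ▸ payoff_ge_third p hp2 u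
  have hE := payoff_entry' p
  rw [← hPdef] at hE
  have hp2' : p 0 + p 1 + p 2 = 1 := by rw [← Fin.sum_univ_three p]; exact hp2
  have hsr : (sN r : ℝ) = (r 0 : ℝ) + r 1 + r 2 := by unfold sN; push_cast; ring
  have hsum_nonneg : 0 ≤ ∑ u, p u * Phi (nb r u) :=
    Finset.sum_nonneg fun u _ => mul_nonneg (hp1 u) (Phi_nonneg _)
  -- ================= branch 3 =================
  have H3 : (1:ℝ) ≤ P + ∑ u, p u * Phi (nb r u) := by
    rcases Nat.lt_or_ge (sN r) 2 with hs | hs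
    · have h1 : (r 0 = 1 ∧ r 1 = 0 ∧ r 2 = 0) ∨ (r 1 = 1 ∧ r 2 = 0 ∧ r 0 = 0) ∨
          (r 2 = 1 ∧ r 0 = 0 ∧ r 1 = 0) := by
        unfold sN at hs hs1; omega
      rcases h1 with ⟨ha, hb, hc⟩ | ⟨ha, hb, hc⟩ | ⟨ha, hb, hc⟩
      · have hz1 : p 1 = 0 := by by_contra hc'; exact (hp3 1 hc') hb
        have hz2 : p 2 = 0 := by by_contra hc'; exact (hp3 2 hc') hc
        have hpay := hE.2.2
        linarith
      · have hz2 : p 2 = 0 := by by_contra hc'; exact (hp3 2 hc') hb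
        have hz0 : p 0 = 0 := by by_contra hc'; exact (hp3 0 hc') hc
        have hpay := hE.1
        linarith
      · have hz0 : p 0 = 0 := by by_contra hc'; exact (hp3 0 hc') hb
        have hz1 : p 1 = 0 := by by_contra hc'; exact (hp3 1 hc') hc
        have hpay := hE.2.1
        linarith
    · have key : ∀ u : Fin 3, p u * 1 ≤ p u * Phi (nb r u) := by
        intro u
        refine mul_le_mul_of_nonneg_left ?_ (hp1 u)
        refine Phi_ge_3 _ ?_
        have := sN_nb_ge r u
        omega
      rw [Fin.sum_univ_three]
      have k0 := key 0
      have k1 := key 1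
      have k2 := key 2
      linarith
  -- ================= branch 2 =================
  have H2 : ((sN r:ℝ) - 3*(mN r:ℝ))/6 ≤ P + ∑ u, p u * Phi (nb r u) := by
    rcases Nat.eq_zero_or_pos (mN r) with hm | hm
    · have base : ∀ u : Fin 3, p u * (((sN r:ℝ) - 1)/6) ≤ p u * Phi (nb r u) := by
        intro u
        by_cases hpu : p u = 0
        · simp [hpu]
        · refine mul_le_mul_of_nonneg_left ?_ (hp1 u)
          refine le_trans ?_ (Phi_ge_2 (nb r u))
          have hsnb : (sN (nb r u) : ℝ) = (sN r : ℝ) - 1 := by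
            rw [sum_nb r u (hp3 u hpu), Nat.cast_sub (sN_pos r u (hp3 u hpu))]
            norm_num
          have hmnb : mN (nb r u) = 0 := by have := mN_nb_le r u; omega
          rw [hsnb, hmnb]
          norm_num
      have hpay : (1:ℝ)/3 ≤ P := by
        rcases mN_zero_cases r hm with hz | hz | hz
        · have : p 0 = 0 := by by_contra hc'; exact (hp3 0 hc') hz
          have := hPv 0; linarith
        · have : p 1 = 0 := by by_contra hc'; exact (hp3 1 hc') hz
          have := hPv 1; linarith
        · have : p 2 = 0 := by by_contra hc'; exact (hp3 2 hc') hz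
          have := hPv 2; linarith
      rw [Fin.sum_univ_three]
      have b0 := base 0
      have b1 := base 1
      have b2 := base 2
      have hmr : (mN r : ℝ) = 0 := by rw [hm]; norm_num
      rw [hmr]
      have hsX : p 0 * (((sN r:ℝ) - 1)/6) + p 1 * (((sN r:ℝ) - 1)/6) + p 2 * (((sN r:ℝ) - 1)/6)
          = ((sN r:ℝ) - 1)/6 := by
        calc p 0 * (((sN r:ℝ) - 1)/6) + p 1 * (((sN r:ℝ) - 1)/6) + p 2 * (((sN r:ℝ) - 1)/6)
            = (p 0 + p 1 + p 2) * (((sN r:ℝ) - 1)/6) := by ring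
          _ = 1 * (((sN r:ℝ) - 1)/6) := by rw [hp2']
          _ = ((sN r:ℝ) - 1)/6 := one_mul _
      linarith [b0, b1, b2]
    · have hminx : r 0 = mN r ∨ r 1 = mN r ∨ r 2 = mN r := by unfold mN; omega
      have base : ∀ u : Fin 3, p u * (((sN r:ℝ) - 1 - 3*(mN r:ℝ))/6) ≤ p u * Phi (nb r u) := by
        intro u
        by_cases hpu : p u = 0
        · simp [hpu]
        · refine mul_le_mul_of_nonneg_left ?_ (hp1 u)
          refine le_trans ?_ (Phi_ge_2 (nb r u))
          have hsnb : (sN (nb r u) : ℝ) = (sN r : ℝ) - 1 := by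
            rw [sum_nb r u (hp3 u hpu), Nat.cast_sub (sN_pos r u (hp3 u hpu))]
            norm_num
          have hmnb : (mN (nb r u) : ℝ) ≤ (mN r : ℝ) := by
            exact_mod_cast mN_nb_le r u
          rw [hsnb]
          linarith
      have extra : ∀ u : Fin 3, r u = mN r → p u ≠ 0 →
          p u * (((sN r:ℝ) - 1 - 3*(mN r:ℝ))/6 + 1/2) ≤ p u * Phi (nb r u) := by
        intro u hu hpu
        refine mul_le_mul_of_nonneg_left ?_ (hp1 u)
        refine le_trans ?_ (Phi_ge_2 (nb r u))
        have hsnb : (sN (nb r u) : ℝ) = (sN r : ℝ) - 1 := by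
          rw [sum_nb r u (hp3 u hpu), Nat.cast_sub (sN_pos r u (hp3 u hpu))]
          norm_num
        have hmnb : mN (nb r u) = mN r - 1 := mN_nb_min r u hu hm
        have hmnb' : (mN (nb r u) : ℝ) = (mN r : ℝ) - 1 := by
          rw [hmnb, Nat.cast_sub hm]
          norm_num
        rw [hsnb, hmnb']
        linarith
      rw [Fin.sum_univ_three]
      have hsX : p 0 * (((sN r:ℝ) - 1 - 3*(mN r:ℝ))/6) + p 1 * (((sN r:ℝ) - 1 - 3*(mN r:ℝ))/6)
          + p 2 * (((sN r:ℝ) - 1 - 3*(mN r:ℝ))/6) = ((sN r:ℝ) - 1 - 3*(mN r:ℝ))/6 := by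
        calc p 0 * (((sN r:ℝ) - 1 - 3*(mN r:ℝ))/6) + p 1 * (((sN r:ℝ) - 1 - 3*(mN r:ℝ))/6)
            + p 2 * (((sN r:ℝ) - 1 - 3*(mN r:ℝ))/6)
            = (p 0 + p 1 + p 2) * (((sN r:ℝ) - 1 - 3*(mN r:ℝ))/6) := by ring
          _ = 1 * (((sN r:ℝ) - 1 - 3*(mN r:ℝ))/6) := by rw [hp2']
          _ = ((sN r:ℝ) - 1 - 3*(mN r:ℝ))/6 := one_mul _
      rcases hminx with h | h | h
      · by_cases hpu : p 0 = 0
        · have ht0 : p 0 * Phi (nb r 0) = 0 := by rw [hpu]; ring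
          have ht0' : p 0 * (((sN r:ℝ) - 1 - 3*(mN r:ℝ))/6) = 0 := by rw [hpu]; ring
          have b1 := base 1
          have b2 := base 2
          have hpay := hPv 0
          linarith
        · have e0 := extra 0 h hpu
          have b1 := base 1
          have b2 := base 2
          have hpay := hPv 0
          linarith
      · by_cases hpu : p 1 = 0
        · have ht0 : p 1 * Phi (nb r 1) = 0 := by rw [hpu]; ring
          have ht0' : p 1 * (((sN r:ℝ) - 1 - 3*(mN r:ℝ))/6) = 0 := by rw [hpu]; ring
          have b0 := base 0
          have b2 := base 2
          have hpay := hPv 1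
          linarith
        · have e1 := extra 1 h hpu
          have b0 := base 0
          have b2 := base 2
          have hpay := hPv 1
          linarith
      · by_cases hpu : p 2 = 0
        · have ht0 : p 2 * Phi (nb r 2) = 0 := by rw [hpu]; ring
          have ht0' : p 2 * (((sN r:ℝ) - 1 - 3*(mN r:ℝ))/6) = 0 := by rw [hpu]; ring
          have b0 := base 0
          have b1 := base 1
          have hpay := hPv 2
          linarith
        · have e2 := extra 2 h hpu
          have b0 := base 0
          have b1 := base 1
          have hpay := hPv 2
          linarith
  -- ================= branch 1 =================
  have H1 : (Real.sqrt ((sN r:ℝ) + Qr r) - 3)/96 ≤ P + ∑ u, p u * Phi (nb r u) := by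
    by_cases hcmp : (Real.sqrt ((sN r:ℝ) + Qr r) - 3)/96 ≤ ((sN r:ℝ) - 3*(mN r:ℝ))/6
    · linarith
    · push_neg at hcmp
      obtain ⟨u, huu⟩ : ∃ x : ℝ, x = (sN r:ℝ) + Qr r := ⟨_, rfl⟩
      rw [← huu] at hcmp ⊢
      have hu3 : (3:ℝ) ≤ u := huu ▸ u_ge_3 r hr
      obtain ⟨squ, hsqu⟩ : ∃ x : ℝ, x = Real.sqrt u := ⟨_, rfl⟩
      rw [← hsqu] at hcmp ⊢
      have hsq2 : squ^2 = u := by rw [hsqu]; exact Real.sq_sqrt (by linarith)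
      have hsqpos : 0 < squ := by rw [hsqu]; exact Real.sqrt_pos.mpr (by linarith)
      obtain ⟨M, hMdef⟩ : ∃ x : ℝ, x = (maxN r : ℝ) - (mN r : ℝ) := ⟨_, rfl⟩
      have hmlemax : mN r ≤ maxN r := by unfold mN maxN; omega
      have hM0 : 0 ≤ M := by
        rw [hMdef]
        have : (mN r : ℝ) ≤ (maxN r : ℝ) := by exact_mod_cast hmlemax
        linarith
      have hc4 : (maxN r : ℝ) + 2*(mN r:ℝ) ≤ (sN r:ℝ) := by
        have : maxN r + 2 * mN r ≤ sN r := by unfold maxN mN sN; omega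
        exact_mod_cast this
      have hc3 : (sN r : ℝ) ≤ 2*(maxN r:ℝ) + (mN r:ℝ) := by
        have : sN r ≤ 2 * maxN r + mN r := by unfold maxN mN sN; omega
        exact_mod_cast this
      have hrv_lb : ∀ v : Fin 3, (mN r : ℝ) ≤ (r v : ℝ) := by
        intro v; exact_mod_cast mN_le r v
      have hrv_ub : ∀ v : Fin 3, (r v : ℝ) ≤ (maxN r : ℝ) := by
        intro v; exact_mod_cast le_maxN r v
      have hM16 : 16*M ≤ squ := by
        have hsm : M ≤ (sN r:ℝ) - 3*(mN r:ℝ) := by rw [hMdef]; linarith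
        linarith
      have heta_ub : ∀ v : Fin 3, (sN r:ℝ) - 3*(r v:ℝ) ≤ 2*M := by
        intro v
        have := hrv_lb v
        rw [hMdef]
        linarith
      have heta_lb : ∀ v : Fin 3, -(2*M) ≤ (sN r:ℝ) - 3*(r v:ℝ) := by
        intro v
        have := hrv_ub v
        rw [hMdef]
        linarith
      have key : ∀ v : Fin 3, p v * ((squ - 3)/96 + (1 + 2*((sN r:ℝ) - 3*(r v:ℝ)))/(192*squ)
          - (1 + 2*((sN r:ℝ) - 3*(r v:ℝ)))^2/(192*u*squ)) ≤ p v * Phi (nb r v) := by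
        intro v
        by_cases hpv : p v = 0
        · simp [hpv]
        · refine mul_le_mul_of_nonneg_left ?_ (hp1 v)
          have hrv := hp3 v hpv
          have hid := unb_eq r v hrv
          rw [← huu] at hid
          refine le_trans ?_ (Phi_ge_1 (nb r v))
          have hnbpos : (0:ℝ) ≤ (sN (nb r v) : ℝ) + Qr (nb r v) := by
            have := Qr_nonneg (nb r v)
            have h9 : (0:ℝ) ≤ (sN (nb r v) : ℝ) := by positivity
            linarith
          rw [hid]
          have htay := sqrt_taylor u (1 + 2*((sN r:ℝ) - 3*(r v:ℝ)))
            (by linarith) (by rw [hid] at hnbpos; linarith)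
          rw [← hsqu] at htay
          have halg : (squ - 3)/96 + (1 + 2*((sN r:ℝ) - 3*(r v:ℝ)))/(192*squ)
              - (1 + 2*((sN r:ℝ) - 3*(r v:ℝ)))^2/(192*u*squ)
              = (squ + (1 + 2*((sN r:ℝ) - 3*(r v:ℝ)))/(2*squ)
                  - (1 + 2*((sN r:ℝ) - 3*(r v:ℝ)))^2/(2*u*squ) - 3)/96 := by
            field_simp
            ring
          have harg : u + 1 + 2*((sN r:ℝ) - 3*(r v:ℝ)) = u + (1 + 2*((sN r:ℝ) - 3*(r v:ℝ))) := by
            ring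
          rw [halg, harg]
          have := Real.sqrt_nonneg (u + (1 + 2*((sN r:ℝ) - 3*(r v:ℝ))))
          linarith
      rw [Fin.sum_univ_three]
      have k0 := key 0
      have k1 := key 1
      have k2 := key 2
      obtain ⟨A1, hA1def⟩ : ∃ x : ℝ, x = p 0 * ((sN r:ℝ) - 3*(r 0:ℝ))
          + p 1 * ((sN r:ℝ) - 3*(r 1:ℝ)) + p 2 * ((sN r:ℝ) - 3*(r 2:ℝ)) := ⟨_, rfl⟩
      obtain ⟨A2, hA2def⟩ : ∃ x : ℝ, x = p 0 * ((sN r:ℝ) - 3*(r 0:ℝ))^2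
          + p 1 * ((sN r:ℝ) - 3*(r 1:ℝ))^2 + p 2 * ((sN r:ℝ) - 3*(r 2:ℝ))^2 := ⟨_, rfl⟩
      have hclosed : p 0 * ((squ - 3)/96 + (1 + 2*((sN r:ℝ) - 3*(r 0:ℝ)))/(192*squ)
            - (1 + 2*((sN r:ℝ) - 3*(r 0:ℝ)))^2/(192*u*squ))
          + p 1 * ((squ - 3)/96 + (1 + 2*((sN r:ℝ) - 3*(r 1:ℝ)))/(192*squ)
            - (1 + 2*((sN r:ℝ) - 3*(r 1:ℝ)))^2/(192*u*squ))
          + p 2 * ((squ - 3)/96 + (1 + 2*((sN r:ℝ) - 3*(r 2:ℝ)))/(192*squ)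
            - (1 + 2*((sN r:ℝ) - 3*(r 2:ℝ)))^2/(192*u*squ))
          = (p 0 + p 1 + p 2) * (squ - 3)/96 + ((p 0 + p 1 + p 2) + 2*A1)/(192*squ)
            - ((p 0 + p 1 + p 2) + 4*A1 + 4*A2)/(192*u*squ) := by
        rw [hA1def, hA2def]
        ring
      rw [hp2'] at hclosed
      have hpv_ub : ∀ v : Fin 3, p v - 1/3 ≤ 2*P := by
        intro v
        have := hPv 0; have := hPv 1; have := hPv 2
        fin_cases v <;>
          (first | (show p 0 - 1/3 ≤ 2*P) | (show p 1 - 1/3 ≤ 2*P) | (show p 2 - 1/3 ≤ 2*P)) <;>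
          linarith
      have hterm : ∀ v : Fin 3, -(4*M*P) ≤ (p v - 1/3) * ((sN r:ℝ) - 3*(r v:ℝ)) ∧
          (p v - 1/3) * ((sN r:ℝ) - 3*(r v:ℝ)) ≤ 4*M*P := by
        intro v
        exact hterm_aux _ _ _ _ (heta_ub v) (heta_lb v) (hpv_ub v)
          (by have := hPv v; linarith) hP0 hM0
      have hgsum : ((sN r:ℝ) - 3*(r 0:ℝ)) + ((sN r:ℝ) - 3*(r 1:ℝ)) + ((sN r:ℝ) - 3*(r 2:ℝ)) = 0 := by
        rw [hsr]; ring
      have hA1eq : A1 = (p 0 - 1/3)*((sN r:ℝ) - 3*(r 0:ℝ)) + (p 1 - 1/3)*((sN r:ℝ) - 3*(r 1:ℝ))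
          + (p 2 - 1/3)*((sN r:ℝ) - 3*(r 2:ℝ)) := by
        rw [hA1def]
        linarith [hgsum]
      have hA1ub : A1 ≤ 12*M*P := by
        rw [hA1eq]
        have t0 := (hterm 0).2
        have t1 := (hterm 1).2
        have t2 := (hterm 2).2
        linarith
      have hA1lb : -(12*M*P) ≤ A1 := by
        rw [hA1eq]
        have t0 := (hterm 0).1
        have t1 := (hterm 1).1
        have t2 := (hterm 2).1
        linarith
      have hA2ub : A2 ≤ 4*M^2 := by
        have sq0 : ((sN r:ℝ) - 3*(r 0:ℝ))^2 ≤ 4*M^2 :=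
          sq_bound_aux _ _ (heta_ub 0) (heta_lb 0)
        have sq1 : ((sN r:ℝ) - 3*(r 1:ℝ))^2 ≤ 4*M^2 :=
          sq_bound_aux _ _ (heta_ub 1) (heta_lb 1)
        have sq2 : ((sN r:ℝ) - 3*(r 2:ℝ))^2 ≤ 4*M^2 :=
          sq_bound_aux _ _ (heta_ub 2) (heta_lb 2)
        have m0 := mul_le_mul_of_nonneg_left sq0 (hp1 0)
        have m1 := mul_le_mul_of_nonneg_left sq1 (hp1 1)
        have m2 := mul_le_mul_of_nonneg_left sq2 (hp1 2)
        have hsX : p 0 * (4*M^2) + p 1 * (4*M^2) + p 2 * (4*M^2) = 4*M^2 := by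
          calc p 0 * (4*M^2) + p 1 * (4*M^2) + p 2 * (4*M^2)
              = (p 0 + p 1 + p 2) * (4*M^2) := by ring
            _ = 1 * (4*M^2) := by rw [hp2']
            _ = 4*M^2 := one_mul _
        rw [hA2def]
        linarith
      have hnum : (1 + 4*A1 + 4*A2) - (1 + 2*A1)*u ≤ 192*P*u*squ :=
        chain_aux A1 A2 M P u squ hA1ub hA1lb hA2ub hM0 hP0 hu3 hsq2 hsqpos hM16
      have heqd : P + (1 + 2*A1)/(192*squ) - (1 + 4*A1 + 4*A2)/(192*u*squ)
          = (192*P*u*squ + (1 + 2*A1)*u - (1 + 4*A1 + 4*A2))/(192*u*squ) := by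
        field_simp
      have target : 0 ≤ P + (1 + 2*A1)/(192*squ) - (1 + 4*A1 + 4*A2)/(192*u*squ) := by
        rw [heqd]
        apply div_nonneg _ (by positivity)
        linarith
      have hone : (1:ℝ) * (squ - 3)/96 = (squ - 3)/96 := by ring
      rw [hone] at hclosed
      linarith [k0, k1, k2, hclosed, target]
  -- ================= combine =================
  have hsne : sN r ≠ 0 := by omega
  have hfin3 : (if sN r = 0 then (0:ℝ) else 1) ≤ P + ∑ u, p u * Phi (nb r u) := by
    rw [if_neg hsne]
    exact H3
  exact max_le (max_le H1 H2) hfin3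

end RPS
namespace RPS

lemma value_le_Psi (r : Fin 3 → ℕ) : C3.value r ≤ Psi r := by
  unfold Digraph'.value
  exact valueAux_le_pot Psi Psi_nonneg
    (fun r hr => ⟨pstar r, pstar_valid r hr, upper_step r hr⟩) _ r

lemma Phi_le_value (r : Fin 3 → ℕ) : Phi r ≤ C3.value r := by
  unfold Digraph'.value
  refine pot_le_valueAux Phi (fun r h => Phi_zero r h)
    (fun r h p h1 h2 h3 => lower_step r h p h1 h2 h3) _ r ?_
  rw [sum_eq_sN]

lemma sN_const (n : ℕ) : sN (fun _ => n) = 3 * n := by show n + n + n = 3 * n; omega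

lemma Qr_const (n : ℕ) : Qr (fun _ => n) = 0 := by unfold Qr; norm_num

lemma sqrt3_ge : (3/2 : ℝ) ≤ Real.sqrt 3 := by
  have h1 := Real.sq_sqrt (by norm_num : (0:ℝ) ≤ 3)
  have h2 := Real.sqrt_nonneg (3:ℝ)
  nlinarith

end RPS
theorem semiRestrictedRPS_value_sqrt :
    ∃ c C : ℝ, 0 < c ∧ 0 < C ∧ ∀ n : ℕ, 1 ≤ n →
      c * Real.sqrt n ≤ C3.value (fun _ => n) ∧
      C3.value (fun _ => n) ≤ C * Real.sqrt n := by
  refine ⟨1/192, Real.sqrt 12, by norm_num, Real.sqrt_pos.mpr (by norm_num), ?_⟩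
  intro n hn
  have hs : RPS.sN (fun _ => n) = 3 * n := RPS.sN_const n
  have hq : RPS.Qr (fun _ => n) = 0 := RPS.Qr_const n
  have hsr : ((RPS.sN (fun _ => n) : ℕ) : ℝ) = 3 * (n:ℝ) := by rw [hs]; push_cast; ring
  have hsqn := Real.sqrt_nonneg (n:ℝ)
  constructor
  · -- lower bound
    have hlow := RPS.Phi_le_value (fun _ => n)
    by_cases hbig : Real.sqrt n ≤ 192
    · have h3 : (1:ℝ) ≤ RPS.Phi (fun _ => n) := RPS.Phi_ge_3 _ (by omega)
      have : 1/192 * Real.sqrt n ≤ 1 := by nlinarith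
      linarith
    · push_neg at hbig
      have h1 := RPS.Phi_ge_1 (fun _ => n)
      rw [hsr, hq] at h1
      have hmul : Real.sqrt (3 * (n:ℝ) + 0) = Real.sqrt 3 * Real.sqrt n := by
        rw [add_zero]
        exact Real.sqrt_mul (by norm_num) _
      rw [hmul] at h1
      have hs3 := RPS.sqrt3_ge
      have hkey : 1/192 * Real.sqrt n ≤ (Real.sqrt 3 * Real.sqrt n - 3)/96 := by
        nlinarith [mul_nonneg (by linarith : (0:ℝ) ≤ Real.sqrt 3 - 3/2) hsqn]
      linarith
  · -- upper bound
    have hup := RPS.value_le_Psi (fun _ => n)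
    have h2 : RPS.Psi (fun _ => n) ≤ Real.sqrt (4 * ((RPS.sN (fun _ => n) : ℕ):ℝ)
        + 2 * RPS.Qr (fun _ => n)) := min_le_right _ _
    rw [hsr, hq] at h2
    have harg : 4 * (3 * (n:ℝ)) + 2 * 0 = 12 * (n:ℝ) := by ring
    rw [harg] at h2
    have hmul : Real.sqrt (12 * (n:ℝ)) = Real.sqrt 12 * Real.sqrt n :=
      Real.sqrt_mul (by norm_num) _
    rw [hmul] at h2
    linarith
end

section
/- For every digraph D there exists a constant C_D > 0 such that for every integer n ≥ 1, max_{v ∈ V(D)} (d^+(v) − d^-(v)) · n ≤ S_D(n·1) ≤ max_{v ∈ V(D)} (d^+(v) − d^-(v)) · n + C_D·√n, where n·1 is the restriction vector giving each vertex the value n. -/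
open Finset

namespace SRG

open Digraph' Real

variable {V : Type} [Fintype V] [DecidableEq V] [Nonempty V] (D : Digraph' V)

lemma sk_eq (v u : V) :
    D.skewAdj v u = (if D.Adj v u then (1:ℝ) else 0) - (if D.Adj u v then 1 else 0) := by
  unfold Digraph'.skewAdj
  by_cases h : D.Adj v u
  · have h2 := D.asymm v u h
    simp [h, h2]
  · by_cases h2 : D.Adj u v <;> simp [h, h2]

set_option linter.unusedSectionVars false

lemma abs_sk_le (v u : V) : |D.skewAdj v u| ≤ 1 := by
  unfold Digraph'.skewAdj
  split <;> [skip; split] <;> simp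

lemma term_eq (p : V → ℝ) (v : V) :
    (∑ u ∈ D.outN v, p u) - ∑ u ∈ D.inN v, p u = ∑ u, p u * D.skewAdj v u := by
  have h1 : ∑ u ∈ D.outN v, p u = ∑ u, p u * (if D.Adj v u then (1:ℝ) else 0) := by
    rw [Digraph'.outN, Finset.sum_filter]
    refine Finset.sum_congr rfl fun u _ => ?_
    by_cases h : D.Adj v u <;> simp [h]
  have h2 : ∑ u ∈ D.inN v, p u = ∑ u, p u * (if D.Adj u v then (1:ℝ) else 0) := by
    rw [Digraph'.inN, Finset.sum_filter]
    refine Finset.sum_congr rfl fun u _ => ?_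
    by_cases h : D.Adj u v <;> simp [h]
  rw [h1, h2, ← Finset.sum_sub_distrib]
  refine Finset.sum_congr rfl fun u _ => ?_
  rw [sk_eq]
  ring

lemma le_payoff (p : V → ℝ) (v : V) : ∑ u, p u * D.skewAdj v u ≤ D.payoff p := by
  rw [← term_eq]
  exact le_csSup ((Set.finite_range _).bddAbove) ⟨v, rfl⟩

lemma payoff_le {p : V → ℝ} {b : ℝ} (h : ∀ v, ∑ u, p u * D.skewAdj v u ≤ b) :
    D.payoff p ≤ b := by
  refine csSup_le (Set.range_nonempty _) ?_
  rintro x ⟨v, rfl⟩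
  simpa [term_eq] using h v

/-- c_v(r). -/
noncomputable def cf (r : V → ℕ) (v : V) : ℝ := ∑ u, (r u : ℝ) * D.skewAdj v u

lemma abs_cf_le (r : V → ℕ) (v : V) : |cf D r v| ≤ ∑ u, (r u : ℝ) := by
  refine (Finset.abs_sum_le_sum_abs _ _).trans ?_
  refine Finset.sum_le_sum fun u _ => ?_
  rw [abs_mul, Nat.abs_cast]
  calc (r u : ℝ) * |D.skewAdj v u| ≤ (r u : ℝ) * 1 :=
        mul_le_mul_of_nonneg_left (abs_sk_le D v u) (Nat.cast_nonneg _)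
    _ = (r u : ℝ) := mul_one _

lemma sum_dec {r : V → ℕ} {u : V} (hu : r u ≠ 0) :
    ∑ w, (r w - if w = u then 1 else 0) = (∑ w, r w) - 1 := by
  have hfun : (fun w => r w - if w = u then 1 else 0) = Function.update r u (r u - 1) := by
    funext w
    by_cases h : w = u
    · subst h; simp [Function.update]
    · simp [Function.update, h]
  have h1 : ∑ w, (r w - if w = u then 1 else 0) = ∑ w, Function.update r u (r u - 1) w := by
    rw [hfun]
  rw [h1, Finset.sum_update_of_mem (Finset.mem_univ u)]
  have h2 : ∑ w, r w = r u + ∑ w ∈ Finset.univ \ {u}, r w := by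
    rw [Finset.sum_eq_sum_sdiff_singleton_add (Finset.mem_univ u) r]; ring
  omega

lemma cf_dec {r : V → ℕ} {u : V} (hu : r u ≠ 0) (v : V) :
    cf D (fun w => r w - if w = u then 1 else 0) v = cf D r v - D.skewAdj v u := by
  have hcast : ∀ w, ((r w - if w = u then 1 else 0 : ℕ) : ℝ)
      = (r w : ℝ) - if w = u then 1 else 0 := by
    intro w
    by_cases h : w = u
    · subst h
      rw [if_pos rfl, if_pos rfl, Nat.cast_sub (Nat.one_le_iff_ne_zero.2 hu), Nat.cast_one]
    · simp [h]
  unfold cf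
  simp only [hcast, sub_mul, ite_mul, one_mul, zero_mul]
  rw [Finset.sum_sub_distrib, Finset.sum_ite_eq' Finset.univ u (fun w => D.skewAdj v w)]
  simp

/-- The proportional distribution. -/
noncomputable def prop (r : V → ℕ) : V → ℝ := fun u => (r u : ℝ) / (∑ w, r w : ℕ)

lemma prop_nonneg (r : V → ℕ) : ∀ u, 0 ≤ prop r u := fun u => by
  unfold prop; positivity

lemma prop_sum {r : V → ℕ} (h : ∑ w, r w ≠ 0) : ∑ u, prop r u = 1 := by
  unfold prop
  rw [← Finset.sum_div]
  rw [← Nat.cast_sum]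
  exact div_self (by exact_mod_cast h)

lemma prop_supp (r : V → ℕ) : ∀ u, prop r u ≠ 0 → r u ≠ 0 := by
  intro u h hc
  exact h (by simp [prop, hc])

lemma prop_term {r : V → ℕ} (v : V) :
    ∑ u, prop r u * D.skewAdj v u = cf D r v / (∑ w, r w : ℕ) := by
  unfold prop cf
  rw [Finset.sum_div]
  exact Finset.sum_congr rfl fun u _ => by ring

lemma payoff_ge_neg_one {p : V → ℝ} (hp : ∀ u, 0 ≤ p u) (hs : ∑ u, p u = 1) :
    -1 ≤ D.payoff p := by
  obtain ⟨v⟩ := ‹Nonempty V›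
  refine le_trans ?_ (le_payoff D p v)
  rw [← hs, ← Finset.sum_neg_distrib]
  refine Finset.sum_le_sum fun u _ => ?_
  have h1 := abs_sk_le D v u
  have h2 := (abs_le.1 h1).1
  nlinarith [hp u]

lemma payoff_le_one {p : V → ℝ} (hp : ∀ u, 0 ≤ p u) (hs : ∑ u, p u = 1) :
    D.payoff p ≤ 1 := by
  refine payoff_le D fun v => ?_
  rw [← hs]
  refine Finset.sum_le_sum fun u _ => ?_
  have h2 := (abs_le.1 (abs_sk_le D v u)).2
  nlinarith [hp u]

lemma abs_valueAux_le : ∀ (N : ℕ) (r : V → ℕ), |D.valueAux N r| ≤ N := by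
  intro N
  induction N with
  | zero => intro r; simp [Digraph'.valueAux]
  | succ N ih =>
    intro r
    rw [Digraph'.valueAux]
    split
    · simp; positivity
    · rename_i hr
      set S := { x : ℝ | ∃ p : V → ℝ, (∀ u, 0 ≤ p u) ∧ (∑ u, p u = 1) ∧
        (∀ u, p u ≠ 0 → r u ≠ 0) ∧
        x = D.payoff p + ∑ u, p u * D.valueAux N (fun w => r w - if w = u then 1 else 0) }
        with hS
      have hsum : ∑ w, r w ≠ 0 := by
        push_neg at hr
        obtain ⟨u, hu⟩ := hr
        intro hc
        exact hu (by
          have := (Finset.sum_eq_zero_iff.1 hc) u (Finset.mem_univ u)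
          exact this)
      have hmem : D.payoff (prop r) + ∑ u, prop r u * D.valueAux N
          (fun w => r w - if w = u then 1 else 0) ∈ S :=
        ⟨prop r, prop_nonneg r, prop_sum hsum, prop_supp r, rfl⟩
      have hlb : ∀ x ∈ S, -((N : ℝ) + 1) ≤ x := by
        rintro x ⟨p, h1, h2, h3, rfl⟩
        have hpay := payoff_ge_neg_one D h1 h2
        have hsum2 : -(N : ℝ) ≤ ∑ u, p u * D.valueAux N
            (fun w => r w - if w = u then 1 else 0) := by
          calc -(N:ℝ) = ∑ u, p u * (-(N:ℝ)) := by
                rw [← Finset.sum_mul, h2, one_mul]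
            _ ≤ _ := Finset.sum_le_sum fun u _ =>
                mul_le_mul_of_nonneg_left ((abs_le.1 (ih _)).1) (h1 u)
        linarith
      have hub : D.payoff (prop r) + ∑ u, prop r u * D.valueAux N
          (fun w => r w - if w = u then 1 else 0) ≤ (N : ℝ) + 1 := by
        have hpay := payoff_le_one D (prop_nonneg r) (prop_sum hsum)
        have hsum2 : ∑ u, prop r u * D.valueAux N
            (fun w => r w - if w = u then 1 else 0) ≤ (N : ℝ) := by
          calc _ ≤ ∑ u, prop r u * (N : ℝ) := Finset.sum_le_sum fun u _ =>
                mul_le_mul_of_nonneg_left ((abs_le.1 (ih _)).2) (prop_nonneg r u)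
            _ = (N : ℝ) := by rw [← Finset.sum_mul, prop_sum hsum, one_mul]
        linarith
      rw [abs_le]
      constructor
      · exact le_csInf ⟨_, hmem⟩ (by push_cast; exact hlb)
      · push_cast
        exact le_trans (csInf_le ⟨-((N:ℝ)+1), hlb⟩ hmem) hub

lemma cf_le_valueAux : ∀ (N : ℕ) (r : V → ℕ), (∑ u, r u) = N → ∀ v₀,
    cf D r v₀ ≤ D.valueAux N r := by
  intro N
  induction N with
  | zero =>
    intro r hr v₀
    have hz : ∀ u, r u = 0 := fun u => (Finset.sum_eq_zero_iff.1 hr) u (Finset.mem_univ u)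
    have : cf D r v₀ = 0 := by
      unfold cf
      refine Finset.sum_eq_zero fun u _ => by rw [hz u]; simp
    rw [this, Digraph'.valueAux]
  | succ N ih =>
    intro r hr v₀
    have hr' : ¬ ∀ u, r u = 0 := by
      intro hc
      rw [Finset.sum_eq_zero fun u _ => hc u] at hr
      omega
    rw [Digraph'.valueAux, if_neg hr']
    have hsum : ∑ w, r w ≠ 0 := by rw [hr]; omega
    refine le_csInf ⟨_, ⟨prop r, prop_nonneg r, prop_sum hsum, prop_supp r, rfl⟩⟩ ?_
    rintro x ⟨p, h1, h2, h3, rfl⟩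
    have key : ∀ u, p u * (cf D r v₀ - D.skewAdj v₀ u) ≤
        p u * D.valueAux N (fun w => r w - if w = u then 1 else 0) := by
      intro u
      by_cases hp : p u = 0
      · rw [hp, zero_mul, zero_mul]
      · have hru := h3 u hp
        have hdec : ∑ w, (r w - if w = u then 1 else 0) = N := by
          rw [sum_dec hru, hr]
          omega
        have := ih _ hdec v₀
        rw [cf_dec D hru v₀] at this
        exact mul_le_mul_of_nonneg_left this (h1 u)
    have hge : ∑ u, p u * (cf D r v₀ - D.skewAdj v₀ u) ≤
        ∑ u, p u * D.valueAux N (fun w => r w - if w = u then 1 else 0) :=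
      Finset.sum_le_sum fun u _ => key u
    have hexp : ∑ u, p u * (cf D r v₀ - D.skewAdj v₀ u)
        = cf D r v₀ - ∑ u, p u * D.skewAdj v₀ u := by
      simp only [mul_sub]
      rw [Finset.sum_sub_distrib, ← Finset.sum_mul, h2, one_mul]
    have hpay := le_payoff D p v₀
    linarith [hge, hexp ▸ hge]

lemma exp_le_quad {x : ℝ} (hx : |x| ≤ 1) : Real.exp x ≤ 1 + x + x ^ 2 := by
  have h := Real.exp_bound hx (n := 2) (by norm_num)
  have h2 : ∑ m ∈ Finset.range 2, x ^ m / (Nat.factorial m) = 1 + x := by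
    simp [Finset.sum_range_succ]
  rw [h2] at h
  have h3 := (abs_le.1 h).2
  rw [sq_abs] at h3
  norm_num [Nat.factorial] at h3
  nlinarith [sq_nonneg x]

lemma amgm2 {x y θ : ℝ} (hx : 0 ≤ x) (hy : 0 ≤ y) (hθ0 : 0 ≤ θ) (hθ1 : θ ≤ 1) :
    x ^ θ * y ^ (1 - θ) ≤ θ * x + (1 - θ) * y := by
  have h := Real.geom_mean_le_arith_mean_weighted Finset.univ ![θ, 1 - θ] ![x, y]
    (fun i _ => by fin_cases i <;> simp [hθ0] <;> linarith)
    (by simp [Fin.sum_univ_two])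
    (fun i _ => by fin_cases i <;> simp [hx, hy])
  simpa [Fin.prod_univ_two, Fin.sum_univ_two] using h

set_option maxHeartbeats 2000000 in
lemma valueAux_le_pot : ∀ (N : ℕ) (r : V → ℕ), ∑ u, r u = N →
    D.valueAux N r ≤ Real.sqrt N * Real.log (∑ v, Real.exp (cf D r v / Real.sqrt N))
      + (Real.log (Fintype.card V) + 3) * Real.sqrt N := by
  intro N
  induction N with
  | zero => intro r hr; simp [Digraph'.valueAux]
  | succ N ih =>
    intro r hr
    push_cast
    set L : ℝ := Real.log (Fintype.card V) with hLdef
    have hcardpos : (0:ℝ) < (Fintype.card V : ℝ) := by exact_mod_cast Fintype.card_pos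
    have hLnn : 0 ≤ L := Real.log_nonneg (by exact_mod_cast Fintype.card_pos)
    set ρ : ℝ := Real.sqrt ((N:ℝ) + 1) with hρdef
    have hρpos : 0 < ρ := Real.sqrt_pos.2 (by positivity)
    have hρ2 : ρ * ρ = (N : ℝ) + 1 := Real.mul_self_sqrt (by positivity)
    set Z : ℝ := ∑ v, Real.exp (cf D r v / ρ) with hZdef
    have hZpos : 0 < Z :=
      Finset.sum_pos (fun v _ => Real.exp_pos _) Finset.univ_nonempty
    have hr' : ¬ ∀ u, r u = 0 := by
      intro hc; rw [Finset.sum_eq_zero fun u _ => hc u] at hr; omega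
    have hsum : ∑ w, r w ≠ 0 := by rw [hr]; omega
    have hcast : ((∑ w, r w : ℕ) : ℝ) = (N : ℝ) + 1 := by rw [hr]; push_cast; ring
    have hpay : D.payoff (prop r) ≤ Real.log Z / ρ := by
      refine payoff_le D fun v => ?_
      rw [prop_term, hcast]
      have h1 : cf D r v / ρ ≤ Real.log Z :=
        (Real.le_log_iff_exp_le hZpos).2 (Finset.single_le_sum
          (f := fun w => Real.exp (cf D r w / ρ))
          (fun w _ => (Real.exp_pos _).le) (Finset.mem_univ v))
      calc cf D r v / ((N:ℝ)+1) = (cf D r v / ρ) / ρ := by rw [div_div, hρ2]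
        _ ≤ Real.log Z / ρ := by gcongr
    rw [Digraph'.valueAux, if_neg hr']
    refine le_trans (csInf_le ⟨-((N:ℝ)+1), ?_⟩
      ⟨prop r, prop_nonneg r, prop_sum hsum, prop_supp r, rfl⟩) ?_
    · rintro x ⟨p, h1, h2, h3, rfl⟩
      have hpayg := payoff_ge_neg_one D h1 h2
      have hlow : -(N:ℝ) ≤ ∑ u, p u * D.valueAux N
          (fun w => r w - if w = u then 1 else 0) := by
        calc -(N:ℝ) = ∑ u, p u * (-(N:ℝ)) := by rw [← Finset.sum_mul, h2, one_mul]
          _ ≤ _ := Finset.sum_le_sum fun u _ =>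
              mul_le_mul_of_nonneg_left ((abs_le.1 (abs_valueAux_le D N _)).1) (h1 u)
      linarith
    by_cases hN0 : N = 0
    · subst hN0
      have hzero : ∑ u, prop r u * D.valueAux 0
          (fun w => r w - if w = u then 1 else 0) = 0 := by
        simp [Digraph'.valueAux]
      rw [hzero, add_zero]
      have hρ1 : ρ = 1 := by rw [hρdef]; norm_num
      have hpay1 := payoff_le_one D (prop_nonneg r) (prop_sum hsum)
      obtain ⟨v₁⟩ := ‹Nonempty V›
      have hcf : -1 ≤ cf D r v₁ / ρ := by
        have := (abs_le.1 (abs_cf_le D r v₁)).1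
        have hsr : ∑ u, (r u : ℝ) = 1 := by
          rw [← Nat.cast_sum]; rw [hcast]; norm_num
        rw [hρ1, div_one]; linarith [hsr ▸ this]
      have hZge : Real.exp (-1) ≤ Z :=
        le_trans (Real.exp_le_exp.2 hcf) (Finset.single_le_sum
          (f := fun w => Real.exp (cf D r w / ρ))
          (fun w _ => (Real.exp_pos _).le) (Finset.mem_univ v₁))
      have hlogZ : (-1:ℝ) ≤ Real.log Z := by
        rw [← Real.log_exp (-1)]
        exact Real.log_le_log (Real.exp_pos _) hZge
      rw [hρ1]
      push_cast
      nlinarith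
    · have hN : 1 ≤ N := Nat.one_le_iff_ne_zero.2 hN0
      have hN1 : (1:ℝ) ≤ (N:ℝ) := by exact_mod_cast hN
      set σ : ℝ := Real.sqrt (N:ℝ) with hσdef
      have hσpos : 0 < σ := Real.sqrt_pos.2 (by linarith)
      have hσ2 : σ * σ = (N:ℝ) := Real.mul_self_sqrt (by linarith)
      have hσ1 : 1 ≤ σ := by nlinarith
      have hσρ : σ ≤ ρ := Real.sqrt_le_sqrt (by linarith)
      have hρ2σ : ρ ≤ 2 * σ := by
        have h4 : (N:ℝ) + 1 ≤ (2*σ)^2 := by nlinarith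
        calc ρ ≤ Real.sqrt ((2*σ)^2) := Real.sqrt_le_sqrt h4
          _ = 2*σ := Real.sqrt_sq (by positivity)
      set θ : ℝ := σ / ρ with hθdef
      have hθ0 : 0 ≤ θ := by positivity
      have hθ1 : θ ≤ 1 := div_le_one_of_le₀ hσρ hρpos.le
      set X : V → ℝ := fun u => ∑ v, Real.exp ((cf D r v - D.skewAdj v u) / σ) with hXdef
      have hXpos : ∀ u, 0 < X u := fun u =>
        Finset.sum_pos (fun v _ => Real.exp_pos _) Finset.univ_nonempty
      -- Step 1: apply IH
      have hstep1 : ∑ u, prop r u * D.valueAux N (fun w => r w - if w = u then 1 else 0)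
          ≤ ∑ u, prop r u * (σ * Real.log (X u) + (L + 3) * σ) := by
        refine Finset.sum_le_sum fun u _ => ?_
        by_cases hp : prop r u = 0
        · rw [hp, zero_mul, zero_mul]
        · have hru := prop_supp r u hp
          have hdec : ∑ w, (r w - if w = u then 1 else 0) = N := by
            rw [sum_dec hru, hr]
            omega
          have hIH := ih _ hdec
          have hXeq : ∑ v, Real.exp (cf D (fun w => r w - if w = u then 1 else 0) v / Real.sqrt (N:ℝ))
              = X u := by
            refine Finset.sum_congr rfl fun v _ => ?_
            rw [cf_dec D hru v, hσdef]
          rw [hXeq] at hIH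
          exact mul_le_mul_of_nonneg_left hIH (prop_nonneg r u)
      have hstep2 : ∑ u, prop r u * (σ * Real.log (X u) + (L + 3) * σ)
          = σ * (∑ u, prop r u * Real.log (X u)) + (L + 3) * σ := by
        simp only [mul_add]
        rw [Finset.sum_add_distrib, Finset.mul_sum]
        congr 1
        · exact Finset.sum_congr rfl fun u _ => by ring
        · rw [← Finset.sum_mul, prop_sum hsum, one_mul]
      -- Step 3: Jensen
      have hJ : ∑ u, prop r u * Real.log (X u) ≤ Real.log (∑ u, prop r u * X u) := by
        have hgm := Real.geom_mean_le_arith_mean_weighted Finset.univ (prop r) X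
          (fun u _ => prop_nonneg r u) (prop_sum hsum) (fun u _ => (hXpos u).le)
        have hprodpos : 0 < ∏ u, X u ^ prop r u :=
          Finset.prod_pos fun u _ => Real.rpow_pos_of_pos (hXpos u) _
        have hlogprod : Real.log (∏ u, X u ^ prop r u)
            = ∑ u, prop r u * Real.log (X u) := by
          rw [Real.log_prod fun u _ => (Real.rpow_pos_of_pos (hXpos u) _).ne']
          exact Finset.sum_congr rfl fun u _ => Real.log_rpow (hXpos u) _
        rw [← hlogprod]
        exact Real.log_le_log hprodpos hgm
      -- positivity of the mixture
      have hposS : 0 < ∑ u, prop r u * X u := by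
        obtain ⟨u₀, hu₀⟩ : ∃ u, r u ≠ 0 := by
          by_contra hc; push_neg at hc; exact hr' fun u => hc u
        have hpu : 0 < prop r u₀ := by
          unfold prop
          have : (0:ℝ) < (r u₀ : ℝ) := by exact_mod_cast Nat.pos_of_ne_zero hu₀
          rw [hcast]; positivity
        exact Finset.sum_pos' (fun u _ => mul_nonneg (prop_nonneg r u) (hXpos u).le)
          ⟨u₀, Finset.mem_univ u₀, mul_pos hpu (hXpos u₀)⟩
      -- Step 4: second moment bound
      have hswap : ∑ u, prop r u * X u = ∑ v, Real.exp (cf D r v / σ) *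
          (∑ u, prop r u * Real.exp (-(D.skewAdj v u) / σ)) := by
        have h1 : ∀ u v, prop r u * Real.exp ((cf D r v - D.skewAdj v u)/σ)
            = Real.exp (cf D r v / σ) * (prop r u * Real.exp (-(D.skewAdj v u)/σ)) := by
          intro u v
          have hsplit : (cf D r v - D.skewAdj v u) / σ
              = cf D r v / σ + (-(D.skewAdj v u)) / σ := by ring
          rw [hsplit, Real.exp_add]
          ring
        calc ∑ u, prop r u * X u
            = ∑ u, ∑ v, Real.exp (cf D r v / σ) * (prop r u * Real.exp (-(D.skewAdj v u)/σ)) := by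
              refine Finset.sum_congr rfl fun u _ => ?_
              rw [hXdef, Finset.mul_sum]
              exact Finset.sum_congr rfl fun v _ => h1 u v
          _ = ∑ v, ∑ u, Real.exp (cf D r v / σ) * (prop r u * Real.exp (-(D.skewAdj v u)/σ)) :=
              Finset.sum_comm
          _ = _ := Finset.sum_congr rfl fun v _ => (Finset.mul_sum _ _ _).symm
      have hinner : ∀ v, ∑ u, prop r u * Real.exp (-(D.skewAdj v u) / σ)
          ≤ Real.exp (1/(σ*σ) - cf D r v / (((N:ℝ)+1)*σ)) := by
        intro v
        have h1 : ∑ u, prop r u * Real.exp (-(D.skewAdj v u) / σ)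
            ≤ ∑ u, prop r u * (1 + 1/(σ*σ) - D.skewAdj v u / σ) := by
          refine Finset.sum_le_sum fun u _ => ?_
          refine mul_le_mul_of_nonneg_left ?_ (prop_nonneg r u)
          have habs : |(-(D.skewAdj v u)) / σ| ≤ 1 := by
            rw [abs_div, abs_neg, abs_of_pos hσpos]
            rw [div_le_one hσpos]
            exact le_trans (abs_sk_le D v u) hσ1
          have hq := exp_le_quad habs
          have hsq : ((-(D.skewAdj v u)) / σ)^2 ≤ 1/(σ*σ) := by
            rw [div_pow]
            have h5 : (-(D.skewAdj v u))^2 ≤ 1 := by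
              rw [neg_sq]
              have h5a := abs_sk_le D v u
              nlinarith [sq_abs (D.skewAdj v u), abs_nonneg (D.skewAdj v u)]
            have h6 : σ^2 = σ*σ := sq σ
            rw [h6]
            gcongr
          calc Real.exp (-(D.skewAdj v u) / σ) ≤ 1 + (-(D.skewAdj v u))/σ
                + ((-(D.skewAdj v u))/σ)^2 := hq
            _ ≤ 1 + 1/(σ*σ) - D.skewAdj v u / σ := by
              have : (-(D.skewAdj v u))/σ = -(D.skewAdj v u / σ) := by ring
              nlinarith [hsq]
        have h2 : ∑ u, prop r u * (1 + 1/(σ*σ) - D.skewAdj v u / σ)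
            = 1 + 1/(σ*σ) - cf D r v / (((N:ℝ)+1)*σ) := by
          have hterm := prop_term D (r := r) v
          rw [hcast] at hterm
          simp only [mul_sub, mul_add, mul_one]
          rw [Finset.sum_sub_distrib, Finset.sum_add_distrib, ← Finset.sum_mul,
            prop_sum hsum]
          have h7 : ∑ u, prop r u * (D.skewAdj v u / σ)
              = (∑ u, prop r u * D.skewAdj v u) / σ := by
            rw [Finset.sum_div]
            exact Finset.sum_congr rfl fun u _ => by ring
          rw [h7, hterm]
          rw [div_div]
          ring
        have h3 : 1 + 1/(σ*σ) - cf D r v / (((N:ℝ)+1)*σ)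
            ≤ Real.exp (1/(σ*σ) - cf D r v / (((N:ℝ)+1)*σ)) := by
          have := Real.add_one_le_exp (1/(σ*σ) - cf D r v / (((N:ℝ)+1)*σ))
          linarith
        linarith [h1, h2 ▸ h1]
      have hexpo : ∀ v, cf D r v / σ + (1/(σ*σ) - cf D r v / (((N:ℝ)+1)*σ))
          = 1/(σ*σ) + θ * (cf D r v / ρ) := by
        intro v
        rw [hθdef]
        have hrule : σ / ρ * (cf D r v / ρ) = σ * cf D r v / ((N:ℝ)+1) := by
          rw [div_mul_div_comm, ← hρ2]
        rw [hrule]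
        have hNσ : (N:ℝ) = σ*σ := hσ2.symm
        rw [hNσ]
        field_simp
        ring
      have hQ : ∑ u, prop r u * X u
          ≤ Real.exp (1/(σ*σ)) * ∑ v, Real.exp (θ * (cf D r v / ρ)) := by
        rw [hswap, Finset.mul_sum]
        refine Finset.sum_le_sum fun v _ => ?_
        calc Real.exp (cf D r v / σ) * (∑ u, prop r u * Real.exp (-(D.skewAdj v u) / σ))
            ≤ Real.exp (cf D r v / σ) * Real.exp (1/(σ*σ) - cf D r v / (((N:ℝ)+1)*σ)) :=
              mul_le_mul_of_nonneg_left (hinner v) (Real.exp_pos _).le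
          _ = Real.exp (1/(σ*σ)) * Real.exp (θ * (cf D r v / ρ)) := by
              rw [← Real.exp_add, ← Real.exp_add, hexpo v]
      -- Step 5: Hölder
      have hH : ∑ v, Real.exp (θ * (cf D r v / ρ))
          ≤ Z ^ θ * (Fintype.card V : ℝ) ^ (1 - θ) := by
        have key : ∀ v, Real.exp (θ * (cf D r v / ρ))
            ≤ Z ^ θ * (Fintype.card V : ℝ) ^ (1 - θ) *
              (θ * (Real.exp (cf D r v / ρ) / Z) + (1 - θ) * (1 / (Fintype.card V : ℝ))) := by
          intro v
          have hgm := amgm2 (x := Real.exp (cf D r v / ρ) / Z)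
            (y := 1 / (Fintype.card V : ℝ)) (by positivity) (by positivity) hθ0 hθ1
          have hZθpos : 0 < Z ^ θ := Real.rpow_pos_of_pos hZpos _
          have hCθpos : 0 < (Fintype.card V : ℝ) ^ (1 - θ) :=
            Real.rpow_pos_of_pos hcardpos _
          have hid : (Real.exp (cf D r v / ρ) / Z) ^ θ * (1 / (Fintype.card V : ℝ)) ^ (1 - θ)
              * (Z ^ θ * (Fintype.card V : ℝ) ^ (1 - θ)) = Real.exp (θ * (cf D r v / ρ)) := by
            rw [Real.div_rpow (Real.exp_pos _).le hZpos.le,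
              Real.div_rpow (by norm_num) hcardpos.le, Real.one_rpow]
            have hexpθ : Real.exp (cf D r v / ρ) ^ θ = Real.exp (θ * (cf D r v / ρ)) := by
              rw [Real.rpow_def_of_pos (Real.exp_pos _), Real.log_exp, mul_comm]
            rw [← hexpθ]
            field_simp
          calc Real.exp (θ * (cf D r v / ρ))
              = (Real.exp (cf D r v / ρ) / Z) ^ θ * (1 / (Fintype.card V : ℝ)) ^ (1 - θ)
                * (Z ^ θ * (Fintype.card V : ℝ) ^ (1 - θ)) := hid.symm
            _ ≤ (θ * (Real.exp (cf D r v / ρ) / Z) + (1 - θ) * (1 / (Fintype.card V : ℝ)))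
                * (Z ^ θ * (Fintype.card V : ℝ) ^ (1 - θ)) :=
                mul_le_mul_of_nonneg_right hgm (by positivity)
            _ = _ := by ring
        calc ∑ v, Real.exp (θ * (cf D r v / ρ))
            ≤ ∑ v, Z ^ θ * (Fintype.card V : ℝ) ^ (1 - θ) *
              (θ * (Real.exp (cf D r v / ρ) / Z) + (1 - θ) * (1 / (Fintype.card V : ℝ))) :=
              Finset.sum_le_sum fun v _ => key v
          _ = Z ^ θ * (Fintype.card V : ℝ) ^ (1 - θ) := by
              rw [← Finset.mul_sum]
              have hs1 : ∑ v, (θ * (Real.exp (cf D r v / ρ) / Z)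
                  + (1 - θ) * (1 / (Fintype.card V : ℝ))) = 1 := by
                rw [Finset.sum_add_distrib]
                have ha : ∑ v, θ * (Real.exp (cf D r v / ρ) / Z) = θ := by
                  rw [← Finset.mul_sum, ← Finset.sum_div, ← hZdef, div_self hZpos.ne', mul_one]
                have hb : ∑ _v : V, (1 - θ) * (1 / (Fintype.card V : ℝ)) = 1 - θ := by
                  rw [Finset.sum_const, Finset.card_univ, nsmul_eq_mul]
                  field_simp
                rw [ha, hb]; ring
              rw [hs1, mul_one]
      -- combine logs
      have hlog : Real.log (∑ u, prop r u * X u)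
          ≤ 1/(σ*σ) + θ * Real.log Z + (1 - θ) * L := by
        have hchain : ∑ u, prop r u * X u
            ≤ Real.exp (1/(σ*σ)) * (Z ^ θ * (Fintype.card V : ℝ) ^ (1 - θ)) := by
          refine le_trans hQ ?_
          exact mul_le_mul_of_nonneg_left hH (Real.exp_pos _).le
        calc Real.log (∑ u, prop r u * X u)
            ≤ Real.log (Real.exp (1/(σ*σ)) * (Z ^ θ * (Fintype.card V : ℝ) ^ (1 - θ))) :=
              Real.log_le_log hposS hchain
          _ = 1/(σ*σ) + θ * Real.log Z + (1 - θ) * L := by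
              rw [Real.log_mul (Real.exp_pos _).ne' (by positivity),
                Real.log_mul (Real.rpow_pos_of_pos hZpos _).ne'
                  (Real.rpow_pos_of_pos hcardpos _).ne',
                Real.log_exp, Real.log_rpow hZpos, Real.log_rpow hcardpos, hLdef]
              ring
      -- final numeric assembly
      have hnum : 1/σ + σ*(1-θ)*L + (L+3)*σ ≤ (L+3)*ρ := by
        have hd : (ρ - σ) * (ρ + σ) = 1 := by nlinarith
        have hmid : σ*(1-θ) ≤ ρ - σ := by
          rw [hθdef]
          have h8 : 1 - σ/ρ = (ρ - σ)/ρ := by field_simp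
          rw [h8]
          have h9 : σ * ((ρ - σ)/ρ) = (ρ - σ) * (σ/ρ) := by ring
          rw [h9]
          calc (ρ - σ) * (σ/ρ) ≤ (ρ - σ) * 1 := by
                refine mul_le_mul_of_nonneg_left ?_ (by linarith)
                rw [div_le_one hρpos]; exact hσρ
            _ = ρ - σ := mul_one _
        have hc : 1/σ ≤ 3*(ρ - σ) := by
          rw [div_le_iff₀ hσpos]
          nlinarith [mul_nonneg (sub_nonneg.2 hσρ) (sub_nonneg.2 hρ2σ)]
        have hmidL : σ*(1-θ)*L ≤ (ρ - σ)*L :=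
          mul_le_mul_of_nonneg_right hmid hLnn
        nlinarith
      -- put everything together
      have hfin : ∑ u, prop r u * D.valueAux N (fun w => r w - if w = u then 1 else 0)
          ≤ 1/σ + σ*θ*Real.log Z + σ*(1-θ)*L + (L+3)*σ := by
        have hA := hstep1
        rw [hstep2] at hA
        have hB : σ * (∑ u, prop r u * Real.log (X u)) ≤ σ * Real.log (∑ u, prop r u * X u) :=
          mul_le_mul_of_nonneg_left hJ hσpos.le
        have hC : σ * Real.log (∑ u, prop r u * X u)
            ≤ σ * (1/(σ*σ) + θ * Real.log Z + (1 - θ) * L) :=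
          mul_le_mul_of_nonneg_left hlog hσpos.le
        have hD : σ * (1/(σ*σ) + θ * Real.log Z + (1 - θ) * L)
            = 1/σ + σ*θ*Real.log Z + σ*(1-θ)*L := by
          field_simp
        linarith
      have hcollect : Real.log Z / ρ + σ*θ*Real.log Z = ρ * Real.log Z := by
        have h1 : σ*θ = σ*σ/ρ := by rw [hθdef]; ring
        rw [h1, hσ2]
        have h2 : Real.log Z / ρ + (N:ℝ)/ρ * Real.log Z = ((N:ℝ)+1)/ρ * Real.log Z := by
          ring
        rw [h2, ← hρ2, mul_div_assoc, div_self hρpos.ne', mul_one]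
      calc D.payoff (prop r) + ∑ u, prop r u * D.valueAux N
            (fun w => r w - if w = u then 1 else 0)
          ≤ Real.log Z / ρ + (1/σ + σ*θ*Real.log Z + σ*(1-θ)*L + (L+3)*σ) := by
            linarith [hpay, hfin]
        _ = ρ * Real.log Z + (1/σ + σ*(1-θ)*L + (L+3)*σ) := by
            linarith [hcollect]
        _ ≤ ρ * Real.log Z + (L+3)*ρ := by linarith [hnum]

lemma sum_sk (v : V) : ∑ u, D.skewAdj v u = ((D.outN v).card : ℝ) - ((D.inN v).card : ℝ) := by
  have h : ∀ u, D.skewAdj v u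
      = (if D.Adj v u then (1:ℝ) else 0) - (if D.Adj u v then 1 else 0) := sk_eq D v
  rw [Finset.sum_congr rfl fun u _ => h u, Finset.sum_sub_distrib]
  rw [Finset.sum_boole, Finset.sum_boole]
  rfl

lemma cf_const (n : ℕ) (v : V) :
    cf D (fun _ => n) v = (n : ℝ) * (((D.outN v).card : ℝ) - ((D.inN v).card : ℝ)) := by
  unfold cf
  rw [← sum_sk D v, Finset.mul_sum]

end SRG

theorem value_uniform_bounds' {V : Type} [Fintype V] [DecidableEq V] [Nonempty V]
    (D : Digraph' V) :
    ∃ C : ℝ, 0 < C ∧ ∀ n : ℕ, 1 ≤ n →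
      (sSup (Set.range fun v => ((D.outN v).card : ℝ) - ((D.inN v).card : ℝ))) * n
          ≤ D.value (fun _ => n) ∧
      D.value (fun _ => n)
          ≤ (sSup (Set.range fun v => ((D.outN v).card : ℝ) - ((D.inN v).card : ℝ))) * n
            + C * Real.sqrt n := by
  classical
  set a : V → ℝ := fun v => ((D.outN v).card : ℝ) - ((D.inN v).card : ℝ) with ha
  set M : ℝ := sSup (Set.range a) with hM
  set L : ℝ := Real.log (Fintype.card V) with hL
  have hcardpos : (0:ℝ) < (Fintype.card V : ℝ) := by exact_mod_cast Fintype.card_pos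
  have hLnn : 0 ≤ L := Real.log_nonneg (by exact_mod_cast Fintype.card_pos)
  have hsqcard : 0 < Real.sqrt (Fintype.card V) := Real.sqrt_pos.2 hcardpos
  refine ⟨(2*L + 3) * Real.sqrt (Fintype.card V) + 1, by positivity, fun n hn => ?_⟩
  have hNsum : ∑ _u : V, n = Fintype.card V * n := by
    rw [Finset.sum_const, Finset.card_univ, smul_eq_mul]
  have hvalue : D.value (fun _ => n) = D.valueAux (∑ _u : V, n) (fun _ => n) := rfl
  constructor
  · -- lower bound
    obtain ⟨v₀, hv₀⟩ : M ∈ Set.range a :=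
      Set.Nonempty.csSup_mem (Set.range_nonempty a) (Set.finite_range a)
    have hlow := SRG.cf_le_valueAux D (∑ _u : V, n) (fun _ => n) rfl v₀
    rw [SRG.cf_const D n v₀] at hlow
    rw [hvalue]
    calc M * (n:ℝ) = (n:ℝ) * a v₀ := by rw [hv₀]; ring
      _ ≤ _ := hlow
  · -- upper bound
    have hup := SRG.valueAux_le_pot D (∑ _u : V, n) (fun _ => n) rfl
    rw [← hvalue] at hup
    set q : ℝ := Real.sqrt ((∑ _u : V, n : ℕ) : ℝ) with hq
    have hqnn : 0 ≤ q := Real.sqrt_nonneg _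
    have hqpos : 0 < q := by
      rw [hq]
      refine Real.sqrt_pos.2 ?_
      rw [hNsum]
      have : (1:ℕ) ≤ Fintype.card V * n := Nat.one_le_iff_ne_zero.2 (by
        have := Fintype.card_pos (α := V); positivity)
      exact_mod_cast this
    have hZle : ∑ v, Real.exp (SRG.cf D (fun _ => n) v / q)
        ≤ (Fintype.card V : ℝ) * Real.exp ((n:ℝ) * M / q) := by
      calc ∑ v, Real.exp (SRG.cf D (fun _ => n) v / q)
          ≤ ∑ _v : V, Real.exp ((n:ℝ) * M / q) := by
            refine Finset.sum_le_sum fun v _ => ?_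
            rw [Real.exp_le_exp, SRG.cf_const D n v]
            have hav : a v ≤ M := le_csSup (Set.finite_range a).bddAbove ⟨v, rfl⟩
            have : (n:ℝ) * a v ≤ (n:ℝ) * M :=
              mul_le_mul_of_nonneg_left hav (Nat.cast_nonneg n)
            gcongr
        _ = (Fintype.card V : ℝ) * Real.exp ((n:ℝ) * M / q) := by
            rw [Finset.sum_const, Finset.card_univ, nsmul_eq_mul]
    have hlogle : Real.log (∑ v, Real.exp (SRG.cf D (fun _ => n) v / q))
        ≤ L + (n:ℝ) * M / q := by
      calc Real.log (∑ v, Real.exp (SRG.cf D (fun _ => n) v / q))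
          ≤ Real.log ((Fintype.card V : ℝ) * Real.exp ((n:ℝ) * M / q)) :=
            Real.log_le_log (Finset.sum_pos (fun v _ => Real.exp_pos _)
              Finset.univ_nonempty) hZle
        _ = L + (n:ℝ) * M / q := by
            rw [Real.log_mul hcardpos.ne' (Real.exp_pos _).ne', Real.log_exp, hL]
    have hmain : D.value (fun _ => n) ≤ (n:ℝ) * M + (2*L + 3) * q := by
      calc D.value (fun _ => n)
          ≤ q * Real.log (∑ v, Real.exp (SRG.cf D (fun _ => n) v / q)) + (L + 3) * q := hup
        _ ≤ q * (L + (n:ℝ) * M / q) + (L + 3) * q := by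
            have := mul_le_mul_of_nonneg_left hlogle hqnn
            linarith
        _ = (n:ℝ) * M + (2*L + 3) * q := by
            rw [mul_add, mul_div_cancel₀ _ hqpos.ne']
            ring
    have hqsplit : q = Real.sqrt (Fintype.card V) * Real.sqrt n := by
      rw [hq, hNsum]
      push_cast
      exact Real.sqrt_mul (Nat.cast_nonneg _) _
    have hfinal : (2*L + 3) * q ≤ ((2*L + 3) * Real.sqrt (Fintype.card V) + 1) * Real.sqrt n := by
      rw [hqsplit]
      have hsn : 0 ≤ Real.sqrt n := Real.sqrt_nonneg _
      nlinarith
    calc D.value (fun _ => n) ≤ (n:ℝ) * M + (2*L + 3) * q := hmain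
      _ ≤ M * n + ((2*L + 3) * Real.sqrt (Fintype.card V) + 1) * Real.sqrt n := by
          linarith [hfinal]


theorem value_uniform_bounds {V : Type} [Fintype V] [DecidableEq V] [Nonempty V]
    (D : Digraph' V) :
    ∃ C : ℝ, 0 < C ∧ ∀ n : ℕ, 1 ≤ n →
      (sSup (Set.range fun v => ((D.outN v).card : ℝ) - ((D.inN v).card : ℝ))) * n
          ≤ D.value (fun _ => n) ∧
      D.value (fun _ => n)
          ≤ (sSup (Set.range fun v => ((D.outN v).card : ℝ) - ((D.inN v).card : ℝ))) * n
            + C * Real.sqrt n := value_uniform_bounds' D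
end
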